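/- arXiv:2111.11735 — 4 statements merged into one kernel-verified Lean document; each statement's English description precedes it below -/
import Mathlib

section
/- Let H be a real Hilbert space, k ≥ 2, and let M be an m-dimensional C^k-submanifold of H. Let φ₁ : V₁ → U₁ ∩ M and φ₂ : V₂ → U₂ ∩ M be two local parametrizations of M with U ∩ M ≠ ∅, where U := U₁ ∩ U₂. Then for all y ∈ U ∩ M and all w₁, w₂ ∈ T_y M one has D²φ₁(x₁)(v₁, v₂) − D²φ₂(x₂)(u₁, u₂) ∈ T_y M, where x_i := φ_i⁻¹(y) and v_i := Dφ₁(x₁)⁻¹ w_i, u_i := Dφ₂(x₂)⁻¹ w_i ∈ ℝ^m for i = 1, 2 (the inverses of Dφ₁(x₁), Dφ₂(x₂) being taken as linear isomorphisms ℝ^m → T_y M). -/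
open Set Function Topology Filter

noncomputable section

/-- `φ : V → U ∩ M` is a `C^k` local parametrization of the subset `M ⊆ H`. -/
structure IsLocalParam {H : Type*} [NormedAddCommGroup H] [NormedSpace ℝ H] {m : ℕ}
    (k : ℕ∞) (M : Set H) (V : Set (EuclideanSpace ℝ (Fin m))) (U : Set H)
    (φ : EuclideanSpace ℝ (Fin m) → H) : Prop where
  isOpen_source : IsOpen V
  isOpen_target : IsOpen U
  contDiffOn : ContDiffOn ℝ k φ V
  injOn : Set.InjOn φ V
  image_eq : φ '' V = U ∩ M
  continuousOn_inv : ContinuousOn (Function.invFunOn φ V) (U ∩ M)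
  immersion : ∀ x ∈ V, Function.Injective (fderivWithin ℝ φ V x)

/-- `M` is an `m`-dimensional `C^k`-submanifold of `H`. -/
def IsSubmanifold {H : Type*} [NormedAddCommGroup H] [NormedSpace ℝ H]
    (k : ℕ∞) (m : ℕ) (M : Set H) : Prop :=
  ∀ y ∈ M, ∃ (V : Set (EuclideanSpace ℝ (Fin m))) (U : Set H)
    (φ : EuclideanSpace ℝ (Fin m) → H), IsLocalParam k M V U φ ∧ y ∈ U

/-- The tangent space `T_y M` of the submanifold `M` at `y`. -/
def TangentAt {H : Type*} [NormedAddCommGroup H] [NormedSpace ℝ H]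
    (k : ℕ∞) (m : ℕ) (M : Set H) (y : H) : Set H :=
  {w | ∃ (V : Set (EuclideanSpace ℝ (Fin m))) (U : Set H)
    (φ : EuclideanSpace ℝ (Fin m) → H) (x : EuclideanSpace ℝ (Fin m)),
    IsLocalParam k M V U φ ∧ x ∈ V ∧ φ x = y ∧ w ∈ Set.range (fderivWithin ℝ φ V x)}

/-- `M` has one chart: a single local parametrization covers all of `M`. -/
def HasOneChart {H : Type*} [NormedAddCommGroup H] [NormedSpace ℝ H]
    (k : ℕ∞) (m : ℕ) (M : Set H) : Prop :=
  ∃ (V : Set (EuclideanSpace ℝ (Fin m))) (U : Set H)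
    (φ : EuclideanSpace ℝ (Fin m) → H), IsLocalParam k M V U φ ∧ M ⊆ U

/-- For two local parametrizations `φ₁, φ₂` of a `C^k`-submanifold `M`
(`k ≥ 2`) with overlapping targets, the difference of the second derivatives
`D²φ₁(x₁)(v₁, v₂) − D²φ₂(x₂)(u₁, u₂)` is tangent to `M` at `y`, where `x_i = φ_i⁻¹(y)`
and `v_i, u_i` are the preimages of the tangent vectors `w_i` under `Dφ₁(x₁)`, `Dφ₂(x₂)`. -/
theorem second_derivative_difference_tangent
    {H : Type*} [NormedAddCommGroup H] [InnerProductSpace ℝ H] [CompleteSpace H]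
    {m : ℕ} {k : ℕ∞} (hk : 2 ≤ k) {M : Set H} (hM : IsSubmanifold k m M)
    {V₁ V₂ : Set (EuclideanSpace ℝ (Fin m))} {U₁ U₂ : Set H}
    {φ₁ φ₂ : EuclideanSpace ℝ (Fin m) → H}
    (h₁ : IsLocalParam k M V₁ U₁ φ₁) (h₂ : IsLocalParam k M V₂ U₂ φ₂)
    (hne : ((U₁ ∩ U₂) ∩ M).Nonempty)
    {y : H} (hy : y ∈ (U₁ ∩ U₂) ∩ M)
    {x₁ x₂ : EuclideanSpace ℝ (Fin m)}
    (hx₁ : x₁ ∈ V₁) (hφ₁ : φ₁ x₁ = y)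
    (hx₂ : x₂ ∈ V₂) (hφ₂ : φ₂ x₂ = y)
    {w₁ w₂ : H} (hw₁ : w₁ ∈ TangentAt k m M y) (hw₂ : w₂ ∈ TangentAt k m M y)
    {v₁ v₂ u₁ u₂ : EuclideanSpace ℝ (Fin m)}
    (hv₁ : fderivWithin ℝ φ₁ V₁ x₁ v₁ = w₁)
    (hv₂ : fderivWithin ℝ φ₁ V₁ x₁ v₂ = w₂)
    (hu₁ : fderivWithin ℝ φ₂ V₂ x₂ u₁ = w₁)
    (hu₂ : fderivWithin ℝ φ₂ V₂ x₂ u₂ = w₂) :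
    fderivWithin ℝ (fderivWithin ℝ φ₁ V₁) V₁ x₁ v₁ v₂
      - fderivWithin ℝ (fderivWithin ℝ φ₂ V₂) V₂ x₂ u₁ u₂ ∈ TangentAt k m M y := by
  classical
  have hV₁ := h₁.isOpen_source
  have hV₂ := h₂.isOpen_source
  have hk' : (2 : WithTop ℕ∞) ≤ (k : WithTop ℕ∞) := by
    simpa using WithTop.coe_le_coe.mpr hk
  have hk1 : (1 : WithTop ℕ∞) ≤ (k : WithTop ℕ∞) := le_trans (by norm_num) hk'
  have hk0 : (k : WithTop ℕ∞) ≠ 0 := (lt_of_lt_of_le zero_lt_one hk1).ne'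
  have hc₁ : ContDiffAt ℝ k φ₁ x₁ := h₁.contDiffOn.contDiffAt (hV₁.mem_nhds hx₁)
  have hc₂ : ContDiffAt ℝ k φ₂ x₂ := h₂.contDiffOn.contDiffAt (hV₂.mem_nhds hx₂)
  have hder₁ : HasFDerivAt φ₁ (fderiv ℝ φ₁ x₁) x₁ := (hc₁.differentiableAt hk0).hasFDerivAt
  have hder₂ : HasFDerivAt φ₂ (fderiv ℝ φ₂ x₂) x₂ := (hc₂.differentiableAt hk0).hasFDerivAt
  have hfdw₁ : fderivWithin ℝ φ₁ V₁ x₁ = fderiv ℝ φ₁ x₁ := fderivWithin_of_isOpen hV₁ hx₁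
  have hfdw₂ : fderivWithin ℝ φ₂ V₂ x₂ = fderiv ℝ φ₂ x₂ := fderivWithin_of_isOpen hV₂ hx₂
  have hinj : Function.Injective (fderiv ℝ φ₁ x₁) := by
    rw [← hfdw₁]; exact h₁.immersion x₁ hx₁
  -- construct a continuous linear left inverse `L` of `fderiv ℝ φ₁ x₁`
  haveI : Nonempty (EuclideanSpace ℝ (Fin m)) := ⟨0⟩
  set K : Submodule ℝ H := LinearMap.range ((fderiv ℝ φ₁ x₁ : (EuclideanSpace ℝ (Fin m)) →L[ℝ] H) : (EuclideanSpace ℝ (Fin m)) →ₗ[ℝ] H)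
    with hKdef
  haveI hKfin : FiniteDimensional ℝ K := by
    apply Module.Finite.range
  set e : (EuclideanSpace ℝ (Fin m)) ≃ₗ[ℝ] K := LinearEquiv.ofInjective ((fderiv ℝ φ₁ x₁ : (EuclideanSpace ℝ (Fin m)) →L[ℝ] H) : (EuclideanSpace ℝ (Fin m)) →ₗ[ℝ] H)
    (by exact hinj) with hedef
  set L : H →L[ℝ] (EuclideanSpace ℝ (Fin m)) :=
    (LinearMap.toContinuousLinearMap (e.symm : K →ₗ[ℝ] (EuclideanSpace ℝ (Fin m)))).comp
      (K.orthogonalProjection : H →L[ℝ] K) with hLdef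
  have hLD : ∀ v : (EuclideanSpace ℝ (Fin m)), L (fderiv ℝ φ₁ x₁ v) = v := by
    intro v
    have hmem : fderiv ℝ φ₁ x₁ v ∈ K := LinearMap.mem_range_self _ v
    have h1 : K.orthogonalProjection (fderiv ℝ φ₁ x₁ v) = ⟨fderiv ℝ φ₁ x₁ v, hmem⟩ :=
      Submodule.orthogonalProjection_mem_subspace_eq_self (⟨fderiv ℝ φ₁ x₁ v, hmem⟩ : K)
    have h2 : e v = ⟨fderiv ℝ φ₁ x₁ v, hmem⟩ := Subtype.ext rfl
    show LinearMap.toContinuousLinearMap (e.symm : K →ₗ[ℝ] (EuclideanSpace ℝ (Fin m)))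
      (K.orthogonalProjection (fderiv ℝ φ₁ x₁ v)) = v
    rw [h1, ← h2]
    simp
  -- local diffeomorphism `ψ = L ∘ φ₁` and its local inverse `g`
  set ψ : (EuclideanSpace ℝ (Fin m)) → (EuclideanSpace ℝ (Fin m)) := fun z => L (φ₁ z) with hψdef
  have hψc : ContDiffAt ℝ k ψ x₁ := L.contDiff.contDiffAt.comp x₁ hc₁
  have hid : L.comp (fderiv ℝ φ₁ x₁)
      = ((ContinuousLinearEquiv.refl ℝ (EuclideanSpace ℝ (Fin m)) : (EuclideanSpace ℝ (Fin m)) ≃L[ℝ] (EuclideanSpace ℝ (Fin m))) : (EuclideanSpace ℝ (Fin m)) →L[ℝ] (EuclideanSpace ℝ (Fin m))) := by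
    refine ContinuousLinearMap.ext fun v => ?_
    simpa using hLD v
  have hψd : HasFDerivAt ψ ((ContinuousLinearEquiv.refl ℝ (EuclideanSpace ℝ (Fin m)) : (EuclideanSpace ℝ (Fin m)) ≃L[ℝ] (EuclideanSpace ℝ (Fin m))) : (EuclideanSpace ℝ (Fin m)) →L[ℝ] (EuclideanSpace ℝ (Fin m))) x₁ := by
    rw [← hid]; exact L.hasFDerivAt.comp x₁ hder₁
  set g : (EuclideanSpace ℝ (Fin m)) → (EuclideanSpace ℝ (Fin m)) := hψc.localInverse hψd hk0 with hgdef
  have hg : ContDiffAt ℝ k g (ψ x₁) := hψc.to_localInverse hψd hk0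
  have hgl : ∀ᶠ z in 𝓝 x₁, g (ψ z) = z :=
    (hψc.hasStrictFDerivAt' hψd hk0).eventually_left_inverse
  -- the transition map τ
  set τ : (EuclideanSpace ℝ (Fin m)) → (EuclideanSpace ℝ (Fin m)) := fun z => g (L (φ₂ z)) with hτdef
  have hLy : L (φ₂ x₂) = ψ x₁ := by show L (φ₂ x₂) = L (φ₁ x₁); rw [hφ₂, hφ₁]
  have hτc : ContDiffAt ℝ k τ x₂ := by
    have h1 : ContDiffAt ℝ k (fun z => L (φ₂ z)) x₂ := L.contDiff.contDiffAt.comp x₂ hc₂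
    have h2 : ContDiffAt ℝ k g (L (φ₂ x₂)) := hLy.symm ▸ hg
    exact h2.comp x₂ h1
  -- τ agrees with the set-theoretic transition map near x₂
  set W : Set (EuclideanSpace ℝ (Fin m)) := V₂ ∩ φ₂ ⁻¹' U₁ with hWdef
  have hWopen : IsOpen W :=
    h₂.contDiffOn.continuousOn.isOpen_inter_preimage hV₂ h₁.isOpen_target
  have hx₂W : x₂ ∈ W := ⟨hx₂, by rw [Set.mem_preimage, hφ₂]; exact hy.1.1⟩
  have hmaps : Set.MapsTo φ₂ W (U₁ ∩ M) := by
    intro z hz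
    have h1 : φ₂ z ∈ U₂ ∩ M := by rw [← h₂.image_eq]; exact Set.mem_image_of_mem _ hz.1
    exact ⟨hz.2, h1.2⟩
  have hexists : ∀ z ∈ W, ∃ a ∈ V₁, φ₁ a = φ₂ z := by
    intro z hz
    have h1 : φ₂ z ∈ φ₁ '' V₁ := by rw [h₁.image_eq]; exact hmaps hz
    obtain ⟨a, ha, hae⟩ := h1
    exact ⟨a, ha, hae⟩
  set σ : (EuclideanSpace ℝ (Fin m)) → (EuclideanSpace ℝ (Fin m)) := fun z => Function.invFunOn φ₁ V₁ (φ₂ z) with hσdef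
  have hσmem : ∀ z ∈ W, σ z ∈ V₁ := fun z hz => Function.invFunOn_mem (hexists z hz)
  have hσeq : ∀ z ∈ W, φ₁ (σ z) = φ₂ z := fun z hz => Function.invFunOn_eq (hexists z hz)
  have hσx₂ : σ x₂ = x₁ :=
    h₁.injOn (hσmem x₂ hx₂W) hx₁ (by rw [hσeq x₂ hx₂W, hφ₂, hφ₁])
  have hσcont : ContinuousAt σ x₂ := by
    have h1 : ContinuousOn (Function.invFunOn φ₁ V₁ ∘ φ₂) W :=
      h₁.continuousOn_inv.comp (h₂.contDiffOn.continuousOn.mono Set.inter_subset_left) hmaps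
    exact h1.continuousAt (hWopen.mem_nhds hx₂W)
  have hσev : ∀ᶠ z in 𝓝 x₂, g (ψ (σ z)) = σ z := by
    have h1 : Filter.Tendsto σ (𝓝 x₂) (𝓝 x₁) := by rw [← hσx₂]; exact hσcont
    exact h1.eventually hgl
  have hkeyev : ∀ᶠ z in 𝓝 x₂, τ z = σ z ∧ φ₁ (τ z) = φ₂ z := by
    filter_upwards [hσev, hWopen.eventually_mem hx₂W] with z hz1 hz2
    have h3 : ψ (σ z) = L (φ₂ z) := by show L (φ₁ (σ z)) = L (φ₂ z); rw [hσeq z hz2]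
    have h4 : τ z = σ z := by show g (L (φ₂ z)) = σ z; rw [← h3]; exact hz1
    exact ⟨h4, by rw [h4]; exact hσeq z hz2⟩
  have hτx₂ : τ x₂ = x₁ := by
    rcases hkeyev.self_of_nhds with ⟨h4, _⟩
    rw [h4, hσx₂]
  have heq : (fun z => φ₁ (τ z)) =ᶠ[𝓝 x₂] φ₂ := hkeyev.mono fun z h => h.2
  -- first derivative of the transition map
  have hτd : HasFDerivAt τ (fderiv ℝ τ x₂) x₂ := (hτc.differentiableAt hk0).hasFDerivAt
  have hder₁' : HasFDerivAt φ₁ (fderiv ℝ φ₁ x₁) (τ x₂) := by rw [hτx₂]; exact hder₁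
  have hcomp : HasFDerivAt (fun z => φ₁ (τ z))
      ((fderiv ℝ φ₁ x₁).comp (fderiv ℝ τ x₂)) x₂ := hder₁'.comp x₂ hτd
  have hD₂eq : fderiv ℝ φ₂ x₂ = (fderiv ℝ φ₁ x₁).comp (fderiv ℝ τ x₂) :=
    hder₂.unique (hcomp.congr_of_eventuallyEq heq.symm)
  have hD₂w₁ : fderiv ℝ φ₂ x₂ u₁ = w₁ := by rw [← hfdw₂]; exact hu₁
  have hD₂w₂ : fderiv ℝ φ₂ x₂ u₂ = w₂ := by rw [← hfdw₂]; exact hu₂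
  have hD₁w₁ : (fderiv ℝ φ₁ x₁) v₁ = w₁ := by rw [← hfdw₁]; exact hv₁
  have hD₁w₂ : (fderiv ℝ φ₁ x₁) v₂ = w₂ := by rw [← hfdw₁]; exact hv₂
  have hDτ1 : fderiv ℝ τ x₂ u₁ = v₁ := by
    apply hinj
    have h1 : (fderiv ℝ φ₁ x₁) (fderiv ℝ τ x₂ u₁) = fderiv ℝ φ₂ x₂ u₁ := by
      rw [hD₂eq]; rfl
    rw [h1, hD₂w₁, hD₁w₁]
  have hDτ2 : fderiv ℝ τ x₂ u₂ = v₂ := by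
    apply hinj
    have h1 : (fderiv ℝ φ₁ x₁) (fderiv ℝ τ x₂ u₂) = fderiv ℝ φ₂ x₂ u₂ := by
      rw [hD₂eq]; rfl
    rw [h1, hD₂w₂, hD₁w₂]
  -- second derivatives exist
  have hc₁2 : ContDiffAt ℝ 2 φ₁ x₁ := hc₁.of_le hk'
  have hc₂2 : ContDiffAt ℝ 2 φ₂ x₂ := hc₂.of_le hk'
  have hτc2 : ContDiffAt ℝ 2 τ x₂ := hτc.of_le hk'
  have h11 : (1 : WithTop ℕ∞) + 1 ≤ (2 : WithTop ℕ∞) := by norm_num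
  have hS₁ : HasFDerivAt (fderiv ℝ φ₁) (fderiv ℝ (fderiv ℝ φ₁) x₁) x₁ :=
    ((hc₁2.fderiv_right h11).differentiableAt one_ne_zero).hasFDerivAt
  have hS₂ : HasFDerivAt (fderiv ℝ φ₂) (fderiv ℝ (fderiv ℝ φ₂) x₂) x₂ :=
    ((hc₂2.fderiv_right h11).differentiableAt one_ne_zero).hasFDerivAt
  have hT : HasFDerivAt (fderiv ℝ τ) (fderiv ℝ (fderiv ℝ τ) x₂) x₂ :=
    ((hτc2.fderiv_right h11).differentiableAt one_ne_zero).hasFDerivAt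
  -- the chain rule identity for first derivatives, eventually near x₂
  have hDiff₁ : ∀ x ∈ V₁, DifferentiableAt ℝ φ₁ x := fun x hx =>
    (h₁.contDiffOn.contDiffAt (hV₁.mem_nhds hx)).differentiableAt hk0
  have hevd : ∀ᶠ z in 𝓝 x₂,
      fderiv ℝ φ₂ z = (fderiv ℝ φ₁ (τ z)).comp (fderiv ℝ τ z) := by
    have e1 : ∀ᶠ z in 𝓝 x₂, ∀ᶠ w in 𝓝 z, φ₁ (τ w) = φ₂ w := heq.eventually_nhds
    have e2 : ∀ᶠ z in 𝓝 x₂, DifferentiableAt ℝ τ z := by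
      have := hτc2.eventually (by simp)
      exact this.mono fun z hz => hz.differentiableAt two_ne_zero
    have e3 : ∀ᶠ z in 𝓝 x₂, τ z ∈ V₁ := by
      have h1 : V₁ ∈ 𝓝 (τ x₂) := by rw [hτx₂]; exact hV₁.mem_nhds hx₁
      exact hτc.continuousAt.preimage_mem_nhds h1
    filter_upwards [e1, e2, e3] with z h1 h2 h3
    have h4 : fderiv ℝ φ₂ z = fderiv ℝ (fun w => φ₁ (τ w)) z :=
      Filter.EventuallyEq.fderiv_eq (h1.mono fun w hw => hw.symm)
    rw [h4]
    exact fderiv_comp z (hDiff₁ _ h3) h2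
  have hFG : (fun z => fderiv ℝ φ₂ z u₂)
      =ᶠ[𝓝 x₂] (fun z => (fderiv ℝ φ₁ (τ z)) (fderiv ℝ τ z u₂)) :=
    hevd.mono fun z hz => by simp only [hz, ContinuousLinearMap.comp_apply]
  -- compute derivatives of both sides at x₂
  have hFd : HasFDerivAt (fun z => fderiv ℝ φ₂ z u₂)
      ((fderiv ℝ φ₂ x₂).comp (0 : (EuclideanSpace ℝ (Fin m)) →L[ℝ] (EuclideanSpace ℝ (Fin m)))
        + (fderiv ℝ (fderiv ℝ φ₂) x₂).flip u₂) x₂ :=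
    hS₂.clm_apply (hasFDerivAt_const u₂ x₂)
  have hS₁' : HasFDerivAt (fderiv ℝ φ₁) (fderiv ℝ (fderiv ℝ φ₁) x₁) (τ x₂) := by
    rw [hτx₂]; exact hS₁
  have hcd : HasFDerivAt (fun z => fderiv ℝ φ₁ (τ z))
      ((fderiv ℝ (fderiv ℝ φ₁) x₁).comp (fderiv ℝ τ x₂)) x₂ := hS₁'.comp x₂ hτd
  have hud : HasFDerivAt (fun z => fderiv ℝ τ z u₂)
      ((fderiv ℝ τ x₂).comp (0 : (EuclideanSpace ℝ (Fin m)) →L[ℝ] (EuclideanSpace ℝ (Fin m)))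
        + (fderiv ℝ (fderiv ℝ τ) x₂).flip u₂) x₂ :=
    hT.clm_apply (hasFDerivAt_const u₂ x₂)
  have hGd := hcd.clm_apply hud
  have hFd' := hGd.congr_of_eventuallyEq hFG
  have hder_eq := hFd.unique hFd'
  have hmain := DFunLike.congr_fun hder_eq u₁
  simp only [ContinuousLinearMap.add_apply, ContinuousLinearMap.comp_apply,
    ContinuousLinearMap.zero_apply, ContinuousLinearMap.flip_apply, ContinuousLinearMap.map_zero,
    zero_add, hτx₂, hDτ1, hDτ2] at hmain
  -- hmain : fderiv ℝ (fderiv ℝ φ₂) x₂ u₁ u₂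
  --   = fderiv ℝ φ₁ x₁ (fderiv ℝ (fderiv ℝ τ) x₂ u₁ u₂) + fderiv ℝ (fderiv ℝ φ₁) x₁ v₁ v₂
  have hgoal₁ : fderivWithin ℝ (fderivWithin ℝ φ₁ V₁) V₁ x₁ = fderiv ℝ (fderiv ℝ φ₁) x₁ := by
    rw [fderivWithin_congr (fun x hx => fderivWithin_of_isOpen hV₁ hx)
      (fderivWithin_of_isOpen hV₁ hx₁), fderivWithin_of_isOpen hV₁ hx₁]
  have hgoal₂ : fderivWithin ℝ (fderivWithin ℝ φ₂ V₂) V₂ x₂ = fderiv ℝ (fderiv ℝ φ₂) x₂ := by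
    rw [fderivWithin_congr (fun x hx => fderivWithin_of_isOpen hV₂ hx)
      (fderivWithin_of_isOpen hV₂ hx₂), fderivWithin_of_isOpen hV₂ hx₂]
  have hfinal : fderivWithin ℝ (fderivWithin ℝ φ₁ V₁) V₁ x₁ v₁ v₂
      - fderivWithin ℝ (fderivWithin ℝ φ₂ V₂) V₂ x₂ u₁ u₂
      = fderiv ℝ φ₁ x₁ (-(fderiv ℝ (fderiv ℝ τ) x₂ u₁ u₂)) := by
    rw [hgoal₁, hgoal₂, hmain, map_neg]
    abel
  rw [hfinal]
  exact ⟨V₁, U₁, φ₁, x₁, h₁, hx₁, hφ₁,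
    ⟨-(fderiv ℝ (fderiv ℝ τ) x₂ u₁ u₂), by rw [fderivWithin_of_isOpen hV₁ hx₁]⟩⟩
end
end

section
/- Let (G, H₀, H) be real separable Hilbert spaces with G ⊆ H₀ ⊆ H and continuous inclusions. Let M be an m-dimensional C²-submanifold of H with M ⊆ G, and let φ : V → U ∩ M be a local parametrization of M satisfying φ ∈ C(V; G) ∩ C¹(V; H₀) ∩ C²(V; H). Let A : H₀ → H be of class C¹ and B : G → H₀ be continuous, and assume A(y) ∈ T_y M and B(y) ∈ T_y M for every y ∈ U ∩ M. Define a, b : V → ℝ^m by Dφ(x) a(x) = A(φ(x)) and Dφ(x) b(x) = B(φ(x)) for x ∈ V (possible and unique since Dφ(x) is a linear isomorphism ℝ^m → T_{φ(x)} M). Then a ∈ C¹(V; ℝ^m), b ∈ C(V; ℝ^m), and for every x ∈ V: DA(φ(x)) B(φ(x)) = Dφ(x)(Da(x) b(x)) + D²φ(x)(a(x), b(x)), where DA denotes the Fréchet derivative of A : H₀ → H and Dφ, D²φ are the Fréchet derivatives of φ as a map into H. -/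
open Set Function

noncomputable section

namespace DecompAux

variable {E F : Type*} [NormedAddCommGroup E] [InnerProductSpace ℝ E] [CompleteSpace E]
  [NormedAddCommGroup F] [InnerProductSpace ℝ F] [CompleteSpace F]

/-- The adjoint as a real continuous linear map. -/
def adjCLM : (E →L[ℝ] F) →L[ℝ] (F →L[ℝ] E) :=
  LinearMap.mkContinuous
    { toFun := fun T => ContinuousLinearMap.adjoint T
      map_add' := fun T S => by simp
      map_smul' := fun r T => by
        simpa using (ContinuousLinearMap.adjoint (𝕜 := ℝ) (E := E) (F := F)).map_smulₛₗ r T }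
    1 (fun T => by
      simpa using (ContinuousLinearMap.adjoint (𝕜 := ℝ) (E := E) (F := F)).norm_map T |>.le)

@[simp] lemma adjCLM_apply (T : E →L[ℝ] F) :
    adjCLM T = ContinuousLinearMap.adjoint T := rfl

lemma isUnit_gram {m : ℕ} (T : EuclideanSpace ℝ (Fin m) →L[ℝ] F)
    (hT : Function.Injective T) :
    IsUnit ((ContinuousLinearMap.adjoint T).comp T) := by
  set S := (ContinuousLinearMap.adjoint T).comp T with hS
  have hinj : Function.Injective S := by
    rw [injective_iff_map_eq_zero]
    intro u hu
    have h0 : (inner ℝ (T u) (T u) : ℝ) = 0 := by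
      rw [← ContinuousLinearMap.adjoint_inner_left]
      have h1 : (ContinuousLinearMap.adjoint T) (T u) = 0 := hu
      rw [h1, inner_zero_left]
    have hTu : T u = 0 := by rwa [inner_self_eq_zero] at h0
    exact hT (by simpa using hTu)
  have hsurj : Function.Surjective S :=
    LinearMap.injective_iff_surjective (f := S.toLinearMap) |>.mp hinj
  let e := ContinuousLinearEquiv.ofBijective S
    (LinearMap.ker_eq_bot.2 hinj) (LinearMap.range_eq_top.2 hsurj)
  have he : ∀ v, e v = S v := fun v => rfl
  refine ⟨⟨S, (e.symm : _ →L[ℝ] _), ?_, ?_⟩, rfl⟩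
  · refine ContinuousLinearMap.ext fun v => ?_
    have h2 := e.apply_symm_apply v
    rw [he] at h2
    simpa [ContinuousLinearMap.mul_apply] using h2
  · refine ContinuousLinearMap.ext fun v => ?_
    have h2 := e.symm_apply_apply v
    rw [he] at h2
    simpa [ContinuousLinearMap.mul_apply] using h2

lemma gram_solve {m : ℕ} (T : EuclideanSpace ℝ (Fin m) →L[ℝ] F)
    (hT : Function.Injective T) (v : EuclideanSpace ℝ (Fin m)) :
    Ring.inverse ((ContinuousLinearMap.adjoint T).comp T)
      ((ContinuousLinearMap.adjoint T) (T v)) = v := by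
  have h := Ring.inverse_mul_cancel _ (isUnit_gram T hT)
  have h2 := congrArg (fun (S : EuclideanSpace ℝ (Fin m) →L[ℝ] EuclideanSpace ℝ (Fin m)) => S v) h
  simpa [ContinuousLinearMap.mul_apply] using h2

end DecompAux

open TopologicalSpace in
/-- Let `(G, H₀, H)` be continuously embedded separable real Hilbert spaces
(the embeddings being the injective continuous linear maps `jG : G → H₀` and `j₀ : H₀ → H`),
let `M ⊆ G` be an `m`-dimensional `C²`-submanifold of `H`, and let `φ : V → U ∩ M` be a local
parametrization with `φ ∈ C(V;G) ∩ C¹(V;H₀) ∩ C²(V;H)`. If `A : H₀ → H` is `C¹`, `B : G → H₀`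
is continuous, both are tangent along `U ∩ M`, and `a, b : V → ℝ^m` are the local coordinate
representations of `A, B`, then `a ∈ C¹`, `b ∈ C⁰`, and
`DA(φ(x)) B(φ(x)) = Dφ(x)(Da(x) b(x)) + D²φ(x)(a(x), b(x))` on `V`. -/
theorem decomposition_DA_B
    {G H₀ H : Type*}
    [NormedAddCommGroup G] [InnerProductSpace ℝ G] [CompleteSpace G] [SeparableSpace G]
    [NormedAddCommGroup H₀] [InnerProductSpace ℝ H₀] [CompleteSpace H₀] [SeparableSpace H₀]
    [NormedAddCommGroup H] [InnerProductSpace ℝ H] [CompleteSpace H] [SeparableSpace H]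
    (jG : G →L[ℝ] H₀) (j₀ : H₀ →L[ℝ] H)
    (hjG : Function.Injective jG) (hj₀ : Function.Injective j₀)
    {m : ℕ} {M : Set H} (hM : IsSubmanifold 2 m M)
    (hMG : M ⊆ Set.range fun g => j₀ (jG g))
    {V : Set (EuclideanSpace ℝ (Fin m))} {U : Set H}
    {φG : EuclideanSpace ℝ (Fin m) → G}
    (hφ : IsLocalParam 2 M V U fun x => j₀ (jG (φG x)))
    (hφG : ContinuousOn φG V)
    (hφ0 : ContDiffOn ℝ 1 (fun x => jG (φG x)) V)
    {A : H₀ → H} (hA : ContDiff ℝ 1 A)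
    {B : G → H₀} (hB : Continuous B)
    (hAtang : ∀ x ∈ V, A (jG (φG x)) ∈ TangentAt 2 m M (j₀ (jG (φG x))))
    (hBtang : ∀ x ∈ V, j₀ (B (φG x)) ∈ TangentAt 2 m M (j₀ (jG (φG x))))
    {a b : EuclideanSpace ℝ (Fin m) → EuclideanSpace ℝ (Fin m)}
    (ha : ∀ x ∈ V, fderivWithin ℝ (fun x => j₀ (jG (φG x))) V x (a x) = A (jG (φG x)))
    (hb : ∀ x ∈ V, fderivWithin ℝ (fun x => j₀ (jG (φG x))) V x (b x) = j₀ (B (φG x))) :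
    ContDiffOn ℝ 1 a V ∧ ContinuousOn b V ∧
      ∀ x ∈ V,
        fderiv ℝ A (jG (φG x)) (B (φG x))
          = fderivWithin ℝ (fun x => j₀ (jG (φG x))) V x (fderivWithin ℝ a V x (b x))
            + fderivWithin ℝ (fderivWithin ℝ (fun x => j₀ (jG (φG x))) V) V x (a x) (b x) := by
  classical
  obtain ⟨hVopen, hUopen, hC2, hinjφ, himg, hcinv, himm⟩ := hφ
  set Φ : EuclideanSpace ℝ (Fin m) → H := (fun x => j₀ (jG (φG x))) with hΦdef
  have hVu : UniqueDiffOn ℝ V := hVopen.uniqueDiffOn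
  set F := fderivWithin ℝ Φ V with hFdef
  have hF1 : ContDiffOn ℝ 1 F V := hC2.fderivWithin hVu (by norm_num)
  have hadj1 : ContDiffOn ℝ 1 (fun y => ContinuousLinearMap.adjoint (F y)) V := by
    have := (DecompAux.adjCLM
      (E := EuclideanSpace ℝ (Fin m)) (F := H)).contDiff.comp_contDiffOn (n := 1) hF1
    exact this.congr (fun y _ => rfl)
  set Gm := fun y => (ContinuousLinearMap.adjoint (F y)).comp (F y) with hGmdef
  have hGm1 : ContDiffOn ℝ 1 Gm V := hadj1.clm_comp hF1
  have hGu : ∀ y ∈ V, IsUnit (Gm y) := fun y hy => DecompAux.isUnit_gram (F y) (himm y hy)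
  have hinv1 : ContDiffOn ℝ 1 (fun y => Ring.inverse (Gm y)) V := by
    intro y hy
    have h1 : ContDiffAt ℝ 1 Gm y := (hGm1 y hy).contDiffAt (hVopen.mem_nhds hy)
    have h2 : ContDiffAt ℝ 1 Ring.inverse (Gm y) := by
      have := contDiffAt_ringInverse ℝ (n := 1) (hGu y hy).unit
      rwa [(hGu y hy).unit_spec] at this
    exact (h2.comp y h1).contDiffWithinAt
  have haeq : ∀ y ∈ V, a y
      = Ring.inverse (Gm y) (ContinuousLinearMap.adjoint (F y) (A (jG (φG y)))) := by
    intro y hy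
    rw [← ha y hy]
    exact (DecompAux.gram_solve (F y) (himm y hy) (a y)).symm
  have hbeq : ∀ y ∈ V, b y
      = Ring.inverse (Gm y) (ContinuousLinearMap.adjoint (F y) (j₀ (B (φG y)))) := by
    intro y hy
    rw [← hb y hy]
    exact (DecompAux.gram_solve (F y) (himm y hy) (b y)).symm
  have haC1 : ContDiffOn ℝ 1 a V := by
    have h1 : ContDiffOn ℝ 1 (fun y => A (jG (φG y))) V := hA.comp_contDiffOn hφ0
    exact (hinv1.clm_apply (hadj1.clm_apply h1)).congr haeq
  have hbC : ContinuousOn b V := by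
    have h1 : ContinuousOn (fun y => j₀ (B (φG y))) V :=
      (j₀.continuous.comp hB).comp_continuousOn hφG
    exact ((hinv1.continuousOn.clm_apply
      (hadj1.continuousOn.clm_apply h1))).congr (fun y hy => hbeq y hy)
  refine ⟨haC1, hbC, ?_⟩
  intro x hx
  have hud := hVu x hx
  have hφ0d : HasFDerivWithinAt (fun y => jG (φG y))
      (fderivWithin ℝ (fun y => jG (φG y)) V x) V x :=
    ((hφ0.differentiableOn one_ne_zero) x hx).hasFDerivWithinAt
  set D0 := fderivWithin ℝ (fun y => jG (φG y)) V x with hD0def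
  have hAd : HasFDerivAt A (fderiv ℝ A (jG (φG x))) (jG (φG x)) :=
    ((hA.differentiable one_ne_zero) (jG (φG x))).hasFDerivAt
  have hRHS : HasFDerivWithinAt (fun y => A (jG (φG y)))
      ((fderiv ℝ A (jG (φG x))).comp D0) V x := hAd.comp_hasFDerivWithinAt x hφ0d
  have hFd : HasFDerivWithinAt F (fderivWithin ℝ F V x) V x :=
    ((hF1.differentiableOn one_ne_zero) x hx).hasFDerivWithinAt
  have had : HasFDerivWithinAt a (fderivWithin ℝ a V x) V x :=
    ((haC1.differentiableOn one_ne_zero) x hx).hasFDerivWithinAt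
  have hLHS : HasFDerivWithinAt (fun y => A (jG (φG y)))
      ((F x).comp (fderivWithin ℝ a V x) + (fderivWithin ℝ F V x).flip (a x)) V x :=
    (hFd.clm_apply had).congr (fun y hy => (ha y hy).symm) ((ha x hx).symm)
  have heq := hud.eq hRHS hLHS
  have happ := ContinuousLinearMap.ext_iff.mp heq (b x)
  simp only [ContinuousLinearMap.add_apply, ContinuousLinearMap.comp_apply,
    ContinuousLinearMap.flip_apply] at happ
  have hcomp : F x = j₀.comp D0 :=
    (j₀.hasFDerivAt.comp_hasFDerivWithinAt x hφ0d).fderivWithin hud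
  have hD0b : D0 (b x) = B (φG x) := by
    apply hj₀
    have h1 : j₀ (D0 (b x)) = F x (b x) := by rw [hcomp]; rfl
    rw [h1, hb x hx]
  have hsym : IsSymmSndFDerivWithinAt ℝ Φ V x :=
    (hC2 x hx).isSymmSndFDerivWithinAt (by norm_num) hVu
      (by rw [hVopen.interior_eq]; exact subset_closure hx) hx
  have hsymm2 : fderivWithin ℝ F V x (b x) (a x) = fderivWithin ℝ F V x (a x) (b x) := by
    rw [hFdef]; exact hsym.eq (b x) (a x)
  rw [hD0b] at happ
  rw [happ, hsymm2]
end
end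

section
/- Let H be a real Banach space and let T₁, …, T_d : ℝ → L(H) be strongly continuous groups on H that are commutative in the sense that for every permutation π of {1, …, d} and every t ∈ ℝ one has T₁(t) ∘ ⋯ ∘ T_d(t) = T_{π(1)}(t) ∘ ⋯ ∘ T_{π(d)}(t). Then for every permutation π of {1, …, d} and all t₁, …, t_d ∈ ℝ one has T₁(t₁) ∘ ⋯ ∘ T_d(t_d) = T_{π(1)}(t_{π(1)}) ∘ ⋯ ∘ T_{π(d)}(t_{π(d)}). -/
private lemma list_pairwise_commute_aux {M : Type*} [Monoid M] {d : ℕ} (f : Fin d → M)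
    (h : ∀ i j, Commute (f i) (f j)) : (List.ofFn f).Pairwise Commute :=
  List.pairwise_ofFn.2 fun i j _ => h i j

/-- From equality of all permuted products at a single "time", deduce pairwise commutation. -/
private lemma pairwise_commute_of_perm_prod {G : Type*} [Group G] :
    ∀ {d : ℕ} (A : Fin d → G),
    (∀ π : Equiv.Perm (Fin d),
      (List.ofFn A).prod = (List.ofFn fun i => A (π i)).prod) →
    ∀ {i j : Fin d}, i ≠ j → Commute (A i) (A j)
  | 0, _, _, i, _, _ => i.elim0
  | 1, _, _, i, j, hij => absurd (Subsingleton.elim i j) hij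
  | (n+2), A, h, i, j, hij => by
    have h01 : (0 : Fin (n+2)) ≠ 1 := by simp [Fin.ext_iff]
    set j' : Fin (n+2) := Equiv.swap (0 : Fin (n+2)) i j with hj'
    have hj'0 : j' ≠ 0 := by
      intro hzero
      apply hij
      have := congrArg (Equiv.swap (0 : Fin (n+2)) i) hzero
      rw [hj'] at this
      rw [Equiv.swap_apply_self, Equiv.swap_apply_left] at this
      exact (this.symm ▸ rfl)
    set σ : Equiv.Perm (Fin (n+2)) :=
      Equiv.swap (0 : Fin (n+2)) i * Equiv.swap 1 j' with hσ
    have hσ0 : σ 0 = i := by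
      rw [hσ]
      simp only [Equiv.Perm.mul_apply]
      rw [Equiv.swap_apply_of_ne_of_ne h01 (Ne.symm hj'0), Equiv.swap_apply_left]
    have hσ1 : σ 1 = j := by
      rw [hσ]
      simp only [Equiv.Perm.mul_apply]
      rw [Equiv.swap_apply_left, hj', Equiv.swap_apply_self]
    set π' : Equiv.Perm (Fin (n+2)) := σ * Equiv.swap (0 : Fin (n+2)) 1 with hπ'
    have hπ'0 : π' 0 = j := by
      rw [hπ']; simp only [Equiv.Perm.mul_apply, Equiv.swap_apply_left]; exact hσ1
    have hπ'1 : π' 1 = i := by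
      rw [hπ']; simp only [Equiv.Perm.mul_apply, Equiv.swap_apply_right]; exact hσ0
    have hπ'k : ∀ k : Fin n, π' k.succ.succ = σ k.succ.succ := by
      intro k
      rw [hπ']
      simp only [Equiv.Perm.mul_apply]
      rw [Equiv.swap_apply_of_ne_of_ne (Fin.succ_ne_zero _) (Fin.succ_succ_ne_one _)]
    have key := (h σ).symm.trans (h π')
    rw [List.ofFn_succ, List.ofFn_succ, List.ofFn_succ (f := fun k => A (π' k)),
      List.ofFn_succ] at key
    simp only [Fin.succ_zero_eq_one] at key
    rw [hσ0, hσ1, hπ'0, hπ'1] at key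
    simp only [hπ'k] at key
    rw [List.prod_cons, List.prod_cons, List.prod_cons, List.prod_cons,
      ← mul_assoc, ← mul_assoc] at key
    exact mul_right_cancel key

/-- If `T₁, …, T_d` are commutative strongly continuous groups on a real
Banach space `H` (commutative meaning that for each permutation `π` and each `t ∈ ℝ` the
compositions `T₁(t) ∘ ⋯ ∘ T_d(t)` and `T_{π(1)}(t) ∘ ⋯ ∘ T_{π(d)}(t)` agree), then for every
permutation `π` and all `t₁, …, t_d ∈ ℝ` one has
`T₁(t₁) ∘ ⋯ ∘ T_d(t_d) = T_{π(1)}(t_{π(1)}) ∘ ⋯ ∘ T_{π(d)}(t_{π(d)})`. -/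
theorem commutative_groups_mixed_parameters
    {H : Type*} [NormedAddCommGroup H] [NormedSpace ℝ H] [CompleteSpace H]
    {d : ℕ} (T : Fin d → ℝ → H →L[ℝ] H)
    (hid : ∀ i, T i 0 = ContinuousLinearMap.id ℝ H)
    (hgrp : ∀ i s t, T i (s + t) = (T i s).comp (T i t))
    (hcont : ∀ i (x : H), Continuous fun t => T i t x)
    (hcomm : ∀ (π : Equiv.Perm (Fin d)) (t : ℝ),
      (List.ofFn fun i => T i t).prod = (List.ofFn fun i => T (π i) t).prod) :
    ∀ (π : Equiv.Perm (Fin d)) (t : Fin d → ℝ),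
      (List.ofFn fun i => T i (t i)).prod
        = (List.ofFn fun i => T (π i) (t (π i))).prod := by
  classical
  have hmul : ∀ i s t, T i s * T i t = T i (s + t) := fun i s t => (hgrp i s t).symm
  -- bundle as units
  have hval_inv : ∀ i (s : ℝ), T i s * T i (-s) = 1 := by
    intro i s; rw [hmul, add_neg_cancel, hid]; rfl
  have hinv_val : ∀ i (s : ℝ), T i (-s) * T i s = 1 := by
    intro i s; rw [hmul, neg_add_cancel, hid]; rfl
  let u : Fin d → ℝ → (H →L[ℝ] H)ˣ := fun i s =>
    ⟨T i s, T i (-s), hval_inv i s, hinv_val i s⟩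
  have huval : ∀ i s, ((u i s : (H →L[ℝ] H))) = T i s := fun _ _ => rfl
  have hval : ∀ (g : Fin d → (H →L[ℝ] H)ˣ),
      (((List.ofFn g).prod : (H →L[ℝ] H)ˣ) : H →L[ℝ] H)
        = (List.ofFn fun i => (g i : H →L[ℝ] H)).prod := by
    intro g
    have h := map_list_prod (Units.coeHom (H →L[ℝ] H)) (List.ofFn g)
    rw [List.map_ofFn] at h
    exact h
  have hmulU : ∀ i s t, u i (s + t) = u i s * u i t := by
    intro i s t
    exact Units.ext (by rw [Units.val_mul, huval, huval, huval, hmul])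
  have honeU : ∀ i, u i 0 = 1 := by
    intro i
    exact Units.ext (by rw [huval, hid]; rfl)
  have hnegU : ∀ i (s : ℝ), u i (-s) = (u i s)⁻¹ := fun i s => Units.ext rfl
  have hcommU : ∀ (π : Equiv.Perm (Fin d)) (t : ℝ),
      (List.ofFn fun i => u i t).prod = (List.ofFn fun i => u (π i) t).prod := by
    intro π t
    exact Units.ext (by rw [hval, hval]; exact hcomm π t)
  -- pairwise commutation at equal parameters
  have hpair : ∀ {i j : Fin d}, i ≠ j → ∀ s : ℝ, Commute (u i s) (u j s) := by
    intro i j hij s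
    exact pairwise_commute_of_perm_prod (fun i => u i s) (fun π => hcommU π s) hij
  -- powers
  have hnatU : ∀ i (n : ℕ) (s : ℝ), u i ((n : ℝ) * s) = (u i s) ^ n := by
    intro i n s
    induction n with
    | zero => simpa using honeU i
    | succ n ih =>
      have : ((n + 1 : ℕ) : ℝ) * s = (n : ℝ) * s + s := by push_cast; ring
      rw [this, hmulU, ih, pow_succ]
  have hzU : ∀ i (z : ℤ) (s : ℝ), u i ((z : ℝ) * s) = (u i s) ^ z := by
    intro i z s
    cases z with
    | ofNat n => simpa using hnatU i n s
    | negSucc n =>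
      have h1 : ((Int.negSucc n : ℤ) : ℝ) * s = -(((n + 1 : ℕ) : ℝ) * s) := by
        push_cast [Int.negSucc_eq]; ring
      rw [h1, hnegU, hnatU, ← zpow_natCast, ← zpow_neg]
      congr 1
  -- rational scaling commutation
  have hq : ∀ {i j : Fin d}, i ≠ j → ∀ (q : ℚ) (s : ℝ),
      Commute (u i ((q : ℝ) * s)) (u j s) := by
    intro i j hij q s
    have hden : ((q.den : ℝ)) ≠ 0 := by exact_mod_cast q.den_nz
    have h1 : Commute (u i (s / (q.den : ℝ))) (u j (s / (q.den : ℝ))) := hpair hij _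
    have h2 : u j s = (u j (s / (q.den : ℝ))) ^ ((q.den : ℤ)) := by
      rw [← hzU]; congr 1; field_simp; norm_cast
    have h3 : u i ((q : ℝ) * s) = (u i (s / (q.den : ℝ))) ^ q.num := by
      rw [← hzU]; congr 1
      rw [Rat.cast_def]; field_simp
    rw [h2, h3]
    exact h1.zpow_zpow _ _
  -- full commutation via density
  have hall : ∀ (i j : Fin d) (s t : ℝ), Commute (T i s) (T j t) := by
    intro i j s t
    by_cases hij : i = j
    · subst hij
      show T i s * T i t = T i t * T i s
      rw [hmul, hmul, add_comm]
    · by_cases ht : t = 0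
      · subst ht
        have : T j 0 = 1 := by rw [hid]; rfl
        rw [this]
        exact Commute.one_right _
      · -- dense set of rational multiples of t
        have hqC : ∀ q : ℚ, T i ((q : ℝ) * t) * T j t = T j t * T i ((q : ℝ) * t) := by
          intro q
          have := hq hij q t
          have h' := congrArg Units.val this
          simpa [Units.val_mul, huval] using h'
        ext x
        show (T i s) ((T j t) x) = (T j t) ((T i s) x)
        have hf : Continuous fun s' : ℝ => (T i s') ((T j t) x) := hcont i _
        have hg : Continuous fun s' : ℝ => (T j t) ((T i s') x) :=
          (T j t).continuous.comp (hcont i x)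
        have hdense : Dense (Set.range fun q : ℚ => ((q : ℝ) * t)) := by
          have h1 : DenseRange ((↑) : ℚ → ℝ) := Rat.denseRange_cast
          have h3 : DenseRange (fun x : ℝ => x * t) :=
            (Homeomorph.mulRight₀ t ht).surjective.denseRange
          exact (h3.comp h1 (Homeomorph.mulRight₀ t ht).continuous)
        have heq : (fun s' : ℝ => (T i s') ((T j t) x))
            = fun s' : ℝ => (T j t) ((T i s') x) := by
          refine Continuous.ext_on hdense hf hg ?_
          rintro _ ⟨q, rfl⟩
          have := congrArg (fun L : H →L[ℝ] H => L x) (hqC q)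
          simpa [ContinuousLinearMap.mul_apply] using this
        exact congrFun heq s
  -- conclude
  intro π t
  have hperm : (List.ofFn fun i => T (π i) (t (π i))).Perm
      (List.ofFn fun i => T i (t i)) := by
    have h := Equiv.Perm.ofFn_comp_perm π (fun i => T i (t i))
    simpa [Function.comp_def] using h
  have hpw : (List.ofFn fun i => T (π i) (t (π i))).Pairwise Commute :=
    list_pairwise_commute_aux _ (fun a b => hall _ _ _ _)
  exact (hperm.prod_eq' hpw).symm
end

section
/- Let (G, H) be real Banach spaces with G ⊆ H and continuous inclusion, let K : (G, ‖·‖_G) → (H, ‖·‖_H) be continuous, and let M be an m-dimensional (G, H)-submanifold of class C¹. Then the following are equivalent: (i) for every y₀ ∈ M there exist T > 0 and a map Y : [0, T] → G with Y(0) = y₀ and Y(t) ∈ M for all t ∈ [0, T], such that Y is continuous as a map into (H, ‖·‖_H), the map s ↦ K(Y(s)) is Bochner integrable on [0, T] with values in H, and Y(t) = y₀ + ∫₀ᵗ K(Y(s)) ds in H for all t ∈ [0, T]; (ii) K(y) ∈ T_y M for every y ∈ M; (iii) the restriction K|_M : (M, ‖·‖_H) → (H, ‖·‖_H) is continuous,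 and for every y₀ ∈ M there exists a solution Y as in (i) which is in addition continuous as a map into (G, ‖·‖_G). -/
open Set Function

noncomputable section

open Topology Filter Metric MeasureTheory intervalIntegral

theorem exists_left_inverse_clm {E H : Type*} [NormedAddCommGroup E] [NormedSpace ℝ E]
    [FiniteDimensional ℝ E] [NormedAddCommGroup H] [NormedSpace ℝ H]
    (A : E →L[ℝ] H) (hA : Function.Injective A) :
    ∃ P : H →L[ℝ] E, ∀ v, P (A v) = v := by
  have hA' : Function.Injective (A : E →ₗ[ℝ] H) := hA
  set S : Submodule ℝ H := LinearMap.range (A : E →ₗ[ℝ] H) with hS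
  have : FiniteDimensional ℝ S := by infer_instance
  obtain ⟨π, hπ⟩ := Submodule.ClosedComplemented.of_finiteDimensional S
  set e : E ≃ₗ[ℝ] S := LinearEquiv.ofInjective (A : E →ₗ[ℝ] H) hA'
  set ee : E ≃L[ℝ] S := e.toContinuousLinearEquiv
  refine ⟨(ee.symm : S →L[ℝ] E).comp π, fun v => ?_⟩
  have h1 : π (A v) = e v := by
    have : (e v : H) = A v := rfl
    rw [← this]; exact hπ (e v)
  simp only [ContinuousLinearMap.comp_apply, h1]
  show ee.symm (e v) = v
  exact e.symm_apply_apply v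

/-- If a curve `γ` lies in `M` near `0` (within `s`), passes through `φ x₀` and has a
derivative `w` at `0` within `s`, and `s` has unique differentiability at `0`, then
`w` is in the range of the differential of the chart `φ` at `x₀`. -/
theorem tangent_of_curve {H : Type*} [NormedAddCommGroup H] [NormedSpace ℝ H]
    {m : ℕ} {M : Set H} {V : Set (EuclideanSpace ℝ (Fin m))} {U : Set H}
    {φ : EuclideanSpace ℝ (Fin m) → H} (hφ : IsLocalParam 1 M V U φ)
    {x₀ : EuclideanSpace ℝ (Fin m)} (hx₀ : x₀ ∈ V)
    {γ : ℝ → H} {w : H} {s : Set ℝ}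
    (hγM : ∀ᶠ t in 𝓝[s] 0, γ t ∈ M) (hγ0 : γ 0 = φ x₀)
    (hd : HasDerivWithinAt γ w s 0) (hs : UniqueDiffWithinAt ℝ s 0) :
    w ∈ Set.range (fderivWithin ℝ φ V x₀) := by
  classical
  have hVo := hφ.isOpen_source
  have hUo := hφ.isOpen_target
  have hφdiff : DifferentiableOn ℝ φ V := hφ.contDiffOn.differentiableOn one_ne_zero
  set A : (EuclideanSpace ℝ (Fin m)) →L[ℝ] H := fderivWithin ℝ φ V x₀ with hAdef
  have hAeq : A = fderiv ℝ φ x₀ := by rw [hAdef, fderivWithin_of_isOpen hVo hx₀]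
  have hφdAt : DifferentiableAt ℝ φ x₀ :=
    (hφdiff x₀ hx₀).differentiableAt (hVo.mem_nhds hx₀)
  have hA : HasFDerivAt φ A x₀ := hAeq ▸ hφdAt.hasFDerivAt
  obtain ⟨P, hP⟩ := exists_left_inverse_clm A (hφ.immersion x₀ hx₀)
  -- ψ = P ∘ φ has invertible strict derivative (the identity) at x₀
  have hφstrict : HasStrictFDerivAt φ A x₀ := by
    have := (hφ.contDiffOn.contDiffAt (hVo.mem_nhds hx₀)).hasStrictFDerivAt one_ne_zero
    rwa [← hAeq] at this
  set ψ : (EuclideanSpace ℝ (Fin m)) → (EuclideanSpace ℝ (Fin m)) := fun x => P (φ x) with hψdef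
  have hψstrict : HasStrictFDerivAt ψ
      ((ContinuousLinearEquiv.refl ℝ (EuclideanSpace ℝ (Fin m)) : (EuclideanSpace ℝ (Fin m)) ≃L[ℝ] (EuclideanSpace ℝ (Fin m))) : (EuclideanSpace ℝ (Fin m)) →L[ℝ] (EuclideanSpace ℝ (Fin m))) x₀ := by
    have h := (P.hasStrictFDerivAt (x := φ x₀)).comp x₀ hφstrict
    have : P.comp A = ((ContinuousLinearEquiv.refl ℝ (EuclideanSpace ℝ (Fin m)) : (EuclideanSpace ℝ (Fin m)) ≃L[ℝ] (EuclideanSpace ℝ (Fin m))) : (EuclideanSpace ℝ (Fin m)) →L[ℝ] (EuclideanSpace ℝ (Fin m))) := by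
      ext v; simp [hP v]
    rwa [this] at h
  set N : (EuclideanSpace ℝ (Fin m)) → (EuclideanSpace ℝ (Fin m)) := hψstrict.localInverse ψ _ x₀ with hNdef
  -- basic facts about the chart
  have hy₀UM : φ x₀ ∈ U ∩ M := hφ.image_eq ▸ mem_image_of_mem φ hx₀
  have hγt : Filter.Tendsto γ (𝓝[s] 0) (𝓝 (φ x₀)) := by
    have := hd.continuousWithinAt
    rwa [ContinuousWithinAt, hγ0] at this
  have hγU : ∀ᶠ t in 𝓝[s] 0, γ t ∈ U := hγt (hUo.mem_nhds hy₀UM.1)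
  have hγUM : ∀ᶠ t in 𝓝[s] 0, γ t ∈ U ∩ M := by
    filter_upwards [hγU, hγM] with t h1 h2 using ⟨h1, h2⟩
  set c : ℝ → (EuclideanSpace ℝ (Fin m)) := fun t => Function.invFunOn φ V (γ t) with hcdef
  have hkey : ∀ᶠ t in 𝓝[s] 0, c t ∈ V ∧ φ (c t) = γ t := by
    filter_upwards [hγUM] with t ht
    have hex : ∃ a ∈ V, φ a = γ t := by
      have : γ t ∈ φ '' V := hφ.image_eq ▸ ht
      obtain ⟨a, ha, hae⟩ := this; exact ⟨a, ha, hae⟩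
    exact ⟨Function.invFunOn_mem hex, Function.invFunOn_eq hex⟩
  have hc0 : c 0 = x₀ := by
    have hex : ∃ a ∈ V, φ a = γ 0 := ⟨x₀, hx₀, hγ0.symm⟩
    have h1 : c 0 ∈ V := Function.invFunOn_mem hex
    have h2 : φ (c 0) = γ 0 := Function.invFunOn_eq hex
    exact hφ.injOn h1 hx₀ (h2.trans hγ0)
  have hctend : Filter.Tendsto c (𝓝[s] 0) (𝓝 x₀) := by
    have h1 : Filter.Tendsto γ (𝓝[s] 0) (𝓝[U ∩ M] (φ x₀)) :=
      tendsto_nhdsWithin_iff.2 ⟨hγt, hγUM⟩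
    have h2 : Filter.Tendsto (Function.invFunOn φ V) (𝓝[U ∩ M] (φ x₀))
        (𝓝 (Function.invFunOn φ V (φ x₀))) := hφ.continuousOn_inv _ hy₀UM
    have h3 : Function.invFunOn φ V (φ x₀) = x₀ := by
      have h : Function.invFunOn φ V (γ 0) = x₀ := hc0
      rwa [hγ0] at h
    rw [h3] at h2
    exact h2.comp h1
  -- eventually c t = N (P (γ t))
  have hev : ∀ᶠ t in 𝓝[s] 0, c t = N (P (γ t)) := by
    have h1 : ∀ᶠ x in 𝓝 x₀, N (ψ x) = x := hψstrict.eventually_left_inverse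
    filter_upwards [hctend.eventually h1, hkey] with t ht1 ht2
    have : ψ (c t) = P (γ t) := by rw [hψdef]; simp only []; rw [ht2.2]
    rw [← this, ht1]
  have hd0 : N (P (γ 0)) = x₀ := by
    have h : P (γ 0) = ψ x₀ := by rw [hγ0]
    rw [h]
    exact hψstrict.localInverse_apply_image
  -- derivative of N ∘ P ∘ γ
  have hNd : HasFDerivAt N
      (((ContinuousLinearEquiv.refl ℝ (EuclideanSpace ℝ (Fin m)) : (EuclideanSpace ℝ (Fin m)) ≃L[ℝ] (EuclideanSpace ℝ (Fin m))).symm : (EuclideanSpace ℝ (Fin m)) →L[ℝ] (EuclideanSpace ℝ (Fin m)))) (ψ x₀) :=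
    hψstrict.to_localInverse.hasFDerivAt
  have hPd : HasDerivWithinAt (fun t => P (γ t)) (P w) s 0 :=
    P.hasFDerivAt.comp_hasDerivWithinAt 0 hd
  have hψx₀ : ψ x₀ = P (γ 0) := by show P (φ x₀) = P (γ 0); rw [hγ0]
  have hdd : HasDerivWithinAt (fun t => N (P (γ t)))
      (((ContinuousLinearEquiv.refl ℝ (EuclideanSpace ℝ (Fin m)) : (EuclideanSpace ℝ (Fin m)) ≃L[ℝ] (EuclideanSpace ℝ (Fin m))).symm : (EuclideanSpace ℝ (Fin m)) →L[ℝ] (EuclideanSpace ℝ (Fin m))) (P w)) s 0 := by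
    refine HasFDerivAt.comp_hasDerivWithinAt 0 ?_ hPd
    rwa [← hψx₀]
  have hcd : HasDerivWithinAt c (P w) s 0 := by
    have h1 : HasDerivWithinAt c
        (((ContinuousLinearEquiv.refl ℝ (EuclideanSpace ℝ (Fin m)) : (EuclideanSpace ℝ (Fin m)) ≃L[ℝ] (EuclideanSpace ℝ (Fin m))).symm : (EuclideanSpace ℝ (Fin m)) →L[ℝ] (EuclideanSpace ℝ (Fin m))) (P w)) s 0 :=
      hdd.congr_of_eventuallyEq hev (hc0.trans hd0.symm)
    simpa using h1
  -- φ ∘ c has derivative A (P w), and φ ∘ c = γ eventually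
  have hA' : HasFDerivAt φ A (c 0) := by rw [hc0]; exact hA
  have hφc : HasDerivWithinAt (fun t => φ (c t)) (A (P w)) s 0 :=
    hA'.comp_hasDerivWithinAt 0 hcd
  have hγd2 : HasDerivWithinAt γ (A (P w)) s 0 := by
    refine hφc.congr_of_eventuallyEq ?_ ?_
    · filter_upwards [hkey] with t ht using ht.2.symm
    · rw [hc0, hγ0]
  -- uniqueness of the derivative
  have huniq : w = A (P w) := by
    have h1 := hs.eq hd.hasFDerivWithinAt hγd2.hasFDerivWithinAt
    have := congrArg (fun (L : ℝ →L[ℝ] H) => L 1) h1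
    simpa using this
  exact ⟨P w, huniq.symm⟩

/-- Chart independence: any tangent vector at `φ x₀` is in the range of the differential
of the chart `φ` at `x₀`. -/
theorem tangentAt_subset_range {H : Type*} [NormedAddCommGroup H] [NormedSpace ℝ H]
    {m : ℕ} {M : Set H} {V : Set (EuclideanSpace ℝ (Fin m))} {U : Set H}
    {φ : EuclideanSpace ℝ (Fin m) → H} (hφ : IsLocalParam 1 M V U φ)
    {x₀ : EuclideanSpace ℝ (Fin m)} (hx₀ : x₀ ∈ V)
    {w : H} (hw : w ∈ TangentAt 1 m M (φ x₀)) :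
    w ∈ Set.range (fderivWithin ℝ φ V x₀) := by
  obtain ⟨V', U', φ', x', hφ', hx', hfx', u, hu⟩ := hw
  have hV'o := hφ'.isOpen_source
  have hA' : HasFDerivAt φ' (fderivWithin ℝ φ' V' x') x' := by
    have h1 : DifferentiableAt ℝ φ' x' :=
      ((hφ'.contDiffOn.differentiableOn one_ne_zero) x' hx').differentiableAt (hV'o.mem_nhds hx')
    rw [fderivWithin_of_isOpen hV'o hx']
    exact h1.hasFDerivAt
  set γ : ℝ → H := fun t => φ' (x' + t • u) with hγdef
  have h0 : x' + (0:ℝ) • u = x' := by simp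
  have hcurve : HasDerivAt (fun t : ℝ => x' + t • u) u 0 := by
    simpa using ((hasDerivAt_id (0:ℝ)).smul_const u).const_add x'
  have hγd : HasDerivAt γ w 0 := by
    have h2 : HasDerivAt γ ((fderivWithin ℝ φ' V' x') u) 0 := by
      refine HasFDerivAt.comp_hasDerivAt 0 ?_ hcurve
      rw [h0]; exact hA'
    rwa [hu] at h2
  have hγ0 : γ 0 = φ x₀ := by
    show φ' (x' + (0:ℝ) • u) = φ x₀
    rw [h0, hfx']
  have hγM : ∀ᶠ t in nhdsWithin (0:ℝ) Set.univ, γ t ∈ M := by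
    rw [nhdsWithin_univ]
    have hx'' : x' + (0:ℝ) • u ∈ V' := h0.symm ▸ hx'
    have hVmem : ∀ᶠ t in 𝓝 (0:ℝ), x' + t • u ∈ V' :=
      by
      have := hcurve.continuousAt (x := (0:ℝ)) (hV'o.mem_nhds (show x' + (0:ℝ) • u ∈ V' from h0.symm ▸ hx'))
      exact this
    filter_upwards [hVmem] with t ht
    have : γ t ∈ φ' '' V' := mem_image_of_mem φ' ht
    rw [hφ'.image_eq] at this
    exact this.2
  exact tangent_of_curve hφ hx₀ hγM hγ0 hγd.hasDerivWithinAt uniqueDiffWithinAt_univ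

open MeasureTheory in
/-- From local solvability to tangency. -/
theorem tangency_of_solutions {G H : Type*} [NormedAddCommGroup G] [NormedSpace ℝ G]
    [NormedAddCommGroup H] [NormedSpace ℝ H] [CompleteSpace H]
    (j : G →L[ℝ] H) (hj : Function.Injective j) {K : G → H} (hK : Continuous K)
    {m : ℕ} {M : Set H} (hM : IsSubmanifold 1 m M)
    (htopo : ContinuousOn (Function.invFun j) M)
    (hsol : ∀ y₀ ∈ M, ∃ T > (0:ℝ), ∃ Y : ℝ → G,
        j (Y 0) = y₀ ∧ (∀ t ∈ Set.Icc 0 T, j (Y t) ∈ M) ∧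
        ContinuousOn (fun t => j (Y t)) (Set.Icc 0 T) ∧
        IntegrableOn (fun s => K (Y s)) (Set.Icc 0 T) ∧
        ∀ t ∈ Set.Icc 0 T, j (Y t) = y₀ + ∫ s in (0:ℝ)..t, K (Y s)) :
    ∀ y ∈ M, ∀ g : G, j g = y → K g ∈ TangentAt 1 m M y := by
  intro y hy g hg
  obtain ⟨V, U, φ, hφ, hyU⟩ := hM y hy
  have hyUM : y ∈ U ∩ M := ⟨hyU, hy⟩
  obtain ⟨x₀, hx₀, hφx₀⟩ : ∃ x₀ ∈ V, φ x₀ = y := by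
    have h : y ∈ φ '' V := by rw [hφ.image_eq]; exact hyUM
    obtain ⟨x₀, hx₀, he⟩ := h; exact ⟨x₀, hx₀, he⟩
  obtain ⟨T, hT, Y, hY0, hYM, hYcont, hYint, hYeq⟩ := hsol y hy
  set γ : ℝ → H := fun t => j (Y t) with hγdef
  have h0T : (0:ℝ) ∈ Icc (0:ℝ) T := ⟨le_rfl, hT.le⟩
  -- Y is continuous (into G) on the interval
  have hYG : ContinuousOn Y (Icc 0 T) := by
    have hYe : ∀ t, Y t = Function.invFun j (γ t) := fun t =>
      (Function.leftInverse_invFun hj (Y t)).symm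
    have : ContinuousOn (fun t => Function.invFun j (γ t)) (Icc 0 T) :=
      htopo.comp hYcont (fun t ht => hYM t ht)
    exact this.congr (fun t _ => hYe t)
  have hq : ContinuousOn (fun s => K (Y s)) (Icc 0 T) := hK.comp_continuousOn hYG
  -- Icc is a neighborhood of 0 within [0, ∞) and (0, ∞)
  have hIccIci : Icc (0:ℝ) T ∈ 𝓝[Ici 0] (0:ℝ) := by
    rw [← Ici_inter_Iic]
    exact inter_mem_nhdsWithin _ (Iic_mem_nhds hT)
  have hIccIoi : Icc (0:ℝ) T ∈ 𝓝[Ioi 0] (0:ℝ) := by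
    refine Filter.mem_of_superset ?_ (fun t ht => ⟨le_of_lt ht.1, ht.2⟩ :
      Ioi (0:ℝ) ∩ Iic T ⊆ Icc 0 T)
    exact inter_mem_nhdsWithin _ (Iic_mem_nhds hT)
  -- the primitive has right derivative K (Y 0) at 0
  have hKY0 : K (Y 0) = K g := by
    have : Y 0 = g := hj (hY0.trans hg.symm)
    rw [this]
  have hprim : HasDerivWithinAt (fun t => y + ∫ s in (0:ℝ)..t, K (Y s))
      (K (Y 0)) (Ici 0) 0 := by
    refine HasDerivWithinAt.const_add y ?_
    refine intervalIntegral.integral_hasDerivWithinAt_right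
      (IntervalIntegrable.refl) ⟨Icc 0 T, hIccIoi, ?_⟩ ?_
    · exact (hq.aestronglyMeasurable measurableSet_Icc)
    · exact (hq 0 h0T).mono_of_mem_nhdsWithin hIccIoi
  have hγd : HasDerivWithinAt γ (K (Y 0)) (Ici 0) 0 := by
    refine hprim.congr_of_eventuallyEq ?_ ?_
    · filter_upwards [hIccIci] with t ht using hYeq t ht
    · rw [hγdef]; simp only []; rw [hY0]; simp
  have hγM : ∀ᶠ t in 𝓝[Ici 0] (0:ℝ), γ t ∈ M := by
    filter_upwards [hIccIci] with t ht using hYM t ht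
  have hγ0 : γ 0 = φ x₀ := hY0.trans hφx₀.symm
  have hw : K g ∈ Set.range (fderivWithin ℝ φ V x₀) := by
    rw [← hKY0]
    exact tangent_of_curve hφ hx₀ hγM hγ0 hγd (uniqueDiffOn_Ici 0 0 self_mem_Ici)
  exact ⟨V, U, φ, x₀, hφ, hx₀, hφx₀, hw⟩


set_option maxHeartbeats 1000000 in
/-- **Peano existence theorem** (via delayed Euler approximations and Arzelà–Ascoli). -/
theorem peano_exists {E : Type*} [NormedAddCommGroup E] [NormedSpace ℝ E]
    [FiniteDimensional ℝ E]
    (f : E → E) (x₀ : E) (r : ℝ) (hr : 0 < r)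
    (hf : ContinuousOn f (Metric.closedBall x₀ r)) :
    ∃ T > (0:ℝ), ∃ x : ℝ → E, x 0 = x₀ ∧ Continuous x ∧
      (∀ t, x t ∈ Metric.closedBall x₀ r) ∧
      ∀ t ∈ Icc (0:ℝ) T, x t = x₀ + ∫ s in (0:ℝ)..t, f (x s) := by
  classical
  -- a bound for f on the ball
  obtain ⟨C₀, hC₀⟩ := (isCompact_closedBall x₀ r).exists_bound_of_continuousOn hf
  set C : ℝ := max C₀ 0 + 1 with hCdef
  have hCpos : 0 < C := by positivity
  have hC : ∀ y ∈ Metric.closedBall x₀ r, ‖f y‖ ≤ C := by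
    intro y hy
    have := hC₀ y hy
    have h2 : C₀ ≤ max C₀ 0 := le_max_left _ _
    linarith
  set T : ℝ := r / C with hTdef
  have hT : 0 < T := div_pos hr hCpos
  have hCT : C * T = r := by
    rw [hTdef]; field_simp
  -- the clamping function
  set τ : ℝ → ℝ := fun t => max 0 (min t T) with hτdef
  have hτ_mem : ∀ t, τ t ∈ Icc (0:ℝ) T := fun t =>
    ⟨le_max_left _ _, max_le hT.le (min_le_right _ _)⟩
  have hτ_eq : ∀ t ∈ Icc (0:ℝ) T, τ t = t := by
    intro t ht
    rw [hτdef]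
    simp only []
    rw [min_eq_left ht.2, max_eq_right ht.1]
  have hτ0 : τ 0 = 0 := hτ_eq 0 ⟨le_rfl, hT.le⟩
  have hτ_dist : ∀ a b, dist (τ a) (τ b) ≤ dist a b := by
    intro a b
    simp only [Real.dist_eq, hτdef]
    calc |max 0 (min a T) - max 0 (min b T)| ≤ |min a T - min b T| := by
          simpa [max_comm] using abs_max_sub_max_le_abs (min a T) (min b T) 0
      _ ≤ |a - b| := by simpa using abs_min_sub_min_le_max (a := a) (b := T) (c := b) (d := T)
  have hτ_le : ∀ t, τ t ≤ max 0 t := fun t => max_le_max le_rfl (min_le_left _ _)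
  -- the delayed Euler approximation for a fixed delay δ
  have main : ∀ δ : ℝ, 0 < δ → ∃ u : ℝ → E, u 0 = x₀ ∧
      (∀ a b, dist (u a) (u b) ≤ C * dist a b) ∧
      (∀ t, u t ∈ Metric.closedBall x₀ r) ∧
      (∀ t ∈ Icc (0:ℝ) T, u t = x₀ + ∫ s in (0:ℝ)..t, f (u (s - δ))) := by
    intro δ hδ
    set F : ℕ → ℝ → E := fun k => Nat.rec (motive := fun _ => ℝ → E) (fun _ => x₀)
      (fun _ Fk t => x₀ + ∫ s in (0:ℝ)..(τ t), f (Fk (s - δ))) k with hFdef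
    have hFsucc : ∀ k t, F (k+1) t = x₀ + ∫ s in (0:ℝ)..(τ t), f (F k (s - δ)) :=
      fun k t => rfl
    -- invariant: values in the ball and a Lipschitz bound
    have hinv : ∀ k, (∀ t, F k t ∈ Metric.closedBall x₀ r) ∧
        (∀ a b, dist (F k a) (F k b) ≤ C * dist a b) := by
      intro k
      induction k with
      | zero =>
        constructor
        · intro t
          show x₀ ∈ Metric.closedBall x₀ r
          simpa using hr.le
        · intro a b
          show dist (x₀ : E) x₀ ≤ C * dist a b
          simp only [dist_self]
          positivity
      | succ k ih =>
        have hFk_lip : LipschitzWith (Real.toNNReal C) (F k) := by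
          apply LipschitzWith.of_dist_le_mul
          intro a b
          rw [Real.coe_toNNReal C hCpos.le]
          exact ih.2 a b
        have hg_cont : Continuous fun s => f (F k (s - δ)) := by
          have h1 : Continuous fun s : ℝ => F k (s - δ) :=
            hFk_lip.continuous.comp (continuous_id.sub continuous_const)
          exact hf.comp_continuous h1 (fun s => ih.1 _)
        have hbound : ∀ a, ‖∫ s in (0:ℝ)..(τ a), f (F k (s - δ))‖ ≤ C * τ a := by
          intro a
          have h := intervalIntegral.norm_integral_le_of_norm_le_const
            (C := C) (a := (0:ℝ)) (b := τ a) (f := fun s => f (F k (s - δ)))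
            (fun s _ => hC _ (ih.1 _))
          simpa [abs_of_nonneg (hτ_mem a).1] using h
        constructor
        · intro t
          rw [Metric.mem_closedBall, hFsucc, dist_eq_norm]
          have h2 : C * τ t ≤ C * T := by
            apply mul_le_mul_of_nonneg_left (hτ_mem t).2 hCpos.le
          calc ‖x₀ + (∫ s in (0:ℝ)..(τ t), f (F k (s - δ))) - x₀‖
              = ‖∫ s in (0:ℝ)..(τ t), f (F k (s - δ))‖ := by rw [add_sub_cancel_left]
            _ ≤ C * τ t := hbound t
            _ ≤ r := by rw [← hCT]; exact h2
        · intro a b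
          rw [hFsucc, hFsucc, dist_eq_norm]
          have heq : x₀ + (∫ s in (0:ℝ)..(τ a), f (F k (s - δ)))
              - (x₀ + ∫ s in (0:ℝ)..(τ b), f (F k (s - δ)))
              = ∫ s in (τ b)..(τ a), f (F k (s - δ)) := by
            rw [add_sub_add_left_eq_sub]
            exact intervalIntegral.integral_interval_sub_left
              (hg_cont.intervalIntegrable _ _) (hg_cont.intervalIntegrable _ _)
          rw [heq]
          calc ‖∫ s in (τ b)..(τ a), f (F k (s - δ))‖ ≤ C * |τ a - τ b| :=
              intervalIntegral.norm_integral_le_of_norm_le_const (fun s _ => hC _ (ih.1 _))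
            _ ≤ C * dist a b := by
              apply mul_le_mul_of_nonneg_left _ hCpos.le
              rw [← Real.dist_eq]; exact hτ_dist a b
    -- stabilization
    have hstab : ∀ k : ℕ, ∀ t ≤ (k:ℝ) * δ, F (k+1) t = F k t := by
      intro k
      induction k with
      | zero =>
        intro t ht
        norm_num at ht
        have hτt : τ t = 0 := by
          rw [hτdef]; simp only []
          rw [max_eq_left]
          exact (min_le_left t T).trans ht
        rw [hFsucc, hτt, intervalIntegral.integral_same, add_zero]
        rfl
      | succ k ih =>
        intro t ht
        rw [hFsucc (k+1) t, hFsucc k t]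
        congr 1
        apply intervalIntegral.integral_congr
        intro s hs
        rw [uIcc_of_le (hτ_mem t).1] at hs
        have hsle : s - δ ≤ (k:ℝ) * δ := by
          have h1 : s ≤ τ t := hs.2
          have h2 : τ t ≤ max 0 t := hτ_le t
          have h3 : max 0 t ≤ ((k:ℝ)+1) * δ := by
            apply max_le (by positivity)
            push_cast at ht; linarith
          push_cast at ht ⊢; nlinarith [hδ.le]
        show f (F (k+1) (s - δ)) = f (F k (s - δ))
        rw [ih (s - δ) hsle]
    obtain ⟨N, hN⟩ : ∃ N : ℕ, T ≤ (N:ℝ) * δ := by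
      obtain ⟨N, hN⟩ := exists_nat_ge (T / δ)
      exact ⟨N, by rwa [div_le_iff₀ hδ] at hN⟩
    refine ⟨F (N+1), ?_, (hinv (N+1)).2, (hinv (N+1)).1, ?_⟩
    · rw [hFsucc, hτ0, intervalIntegral.integral_same, add_zero]
    · intro t ht
      rw [hFsucc, hτ_eq t ht]
      congr 1
      apply intervalIntegral.integral_congr
      intro s hs
      rw [uIcc_of_le ht.1] at hs
      have hsle : s - δ ≤ (N:ℝ) * δ := by
        have := hs.2
        have := ht.2
        linarith
      show f (F N (s - δ)) = f (F (N+1) (s - δ))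
      rw [hstab N (s - δ) hsle]
  -- the sequence of approximations
  have hδpos : ∀ n : ℕ, (0:ℝ) < T / (n+1) := fun n => div_pos hT (by positivity)
  choose u hu0 hulip huball hueq using fun n : ℕ => main (T/(n+1)) (hδpos n)
  have hucont : ∀ n, Continuous (u n) := by
    intro n
    refine (LipschitzWith.of_dist_le_mul (K := Real.toNNReal C) ?_).continuous
    intro a b
    rw [Real.coe_toNNReal C hCpos.le]
    exact hulip n a b
  -- Arzelà–Ascoli
  haveI : CompactSpace (Icc (0:ℝ) T) := isCompact_iff_compactSpace.mp isCompact_Icc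
  set gseq : ℕ → BoundedContinuousFunction (Icc (0:ℝ) T) E := fun n =>
    BoundedContinuousFunction.mkOfCompact
      ⟨fun a => u n a, (hucont n).comp continuous_subtype_val⟩ with hgseq
  have hcompact : IsCompact (closure (Set.range gseq)) := by
    apply BoundedContinuousFunction.arzela_ascoli (Metric.closedBall x₀ r)
      (isCompact_closedBall x₀ r) (Set.range gseq)
    · rintro g a ⟨n, rfl⟩
      exact huball n a
    · apply Metric.equicontinuous_of_continuity_modulus (fun d => C * d)
      · have h : Continuous (fun d : ℝ => C * d) := continuous_const.mul continuous_id
        have h2 := h.tendsto 0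
        simpa using h2
      · rintro a b ⟨g, n, rfl⟩
        show dist (u n a) (u n b) ≤ C * dist a b
        calc dist (u n a) (u n b) ≤ C * dist (a:ℝ) (b:ℝ) := hulip n a b
          _ ≤ C * dist a b := by rw [Subtype.dist_eq]
  obtain ⟨glim, -, σ, hσ, hconv⟩ :=
    hcompact.tendsto_subseq (fun n => subset_closure ⟨n, rfl⟩)
  -- pointwise convergence
  have hpt : ∀ a : Icc (0:ℝ) T, Tendsto (fun k => u (σ k) a) atTop (𝓝 (glim a)) := by
    intro a
    exact ((continuous_eval_const (F := BoundedContinuousFunction (Icc (0:ℝ) T) E) a).tendsto glim).comp hconv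
  -- the limit function
  set xf : ℝ → E := fun t => glim ⟨τ t, hτ_mem t⟩ with hxf
  have hτcont : Continuous τ := by
    rw [hτdef]; fun_prop
  have hxcont : Continuous xf :=
    glim.continuous.comp (hτcont.subtype_mk hτ_mem)
  have hxf_icc : ∀ t, ∀ ht : t ∈ Icc (0:ℝ) T, xf t = glim ⟨t, ht⟩ := by
    intro t ht
    show glim ⟨τ t, hτ_mem t⟩ = glim ⟨t, ht⟩
    exact congrArg glim (Subtype.ext (hτ_eq t ht))
  have hxball : ∀ t, xf t ∈ Metric.closedBall x₀ r := by
    intro t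
    exact Metric.isClosed_closedBall.mem_of_tendsto (hpt ⟨τ t, hτ_mem t⟩)
      (Filter.Eventually.of_forall fun k => huball _ _)
  have hx0 : xf 0 = x₀ := by
    have h1 : Tendsto (fun k => u (σ k) ((⟨0, ⟨le_rfl, hT.le⟩⟩ : Icc (0:ℝ) T) : ℝ))
        atTop (𝓝 (glim ⟨0, ⟨le_rfl, hT.le⟩⟩)) := hpt _
    have h2 : Tendsto (fun _ : ℕ => x₀) atTop (𝓝 (glim ⟨0, ⟨le_rfl, hT.le⟩⟩)) := by
      refine h1.congr fun k => ?_
      show u (σ k) 0 = x₀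
      exact hu0 _
    have h3 := tendsto_nhds_unique h2 tendsto_const_nhds
    have h4 : (⟨τ 0, hτ_mem 0⟩ : Icc (0:ℝ) T) = ⟨0, ⟨le_rfl, hT.le⟩⟩ := Subtype.ext hτ0
    show glim ⟨τ 0, hτ_mem 0⟩ = x₀
    rw [h4, h3]
  refine ⟨T, hT, xf, hx0, hxcont, hxball, ?_⟩
  -- limit of the delayed integral equations
  intro t ht
  set δσ : ℕ → ℝ := fun k => T / (σ k + 1) with hδσ
  have hδσpos : ∀ k, 0 < δσ k := fun k => hδpos (σ k)
  have hδσ0 : Tendsto δσ atTop (𝓝 0) := by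
    apply squeeze_zero (fun k => (hδσpos k).le) (g := fun k : ℕ => T / (k + 1))
    · intro k
      apply div_le_div_of_nonneg_left hT.le (by positivity)
      have : (k:ℝ) ≤ σ k := by exact_mod_cast hσ.le_apply
      linarith
    · have h := tendsto_one_div_add_atTop_nhds_zero_nat (𝕜 := ℝ)
      have h2 := h.const_mul T
      simpa [div_eq_mul_inv, mul_comm, mul_assoc, one_div] using h2
  set εd : ℕ → ℝ := fun k => dist (gseq (σ k)) glim with hεd
  have hεd0 : Tendsto εd atTop (𝓝 0) := tendsto_iff_dist_tendsto_zero.mp hconv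
  have hfu : ∀ k, Continuous fun s : ℝ => f (u (σ k) (s - δσ k)) := by
    intro k
    have h1 : Continuous fun s : ℝ => u (σ k) (s - δσ k) :=
      (hucont (σ k)).comp (continuous_id.sub continuous_const)
    exact hf.comp_continuous h1 (fun s => huball _ _)
  have hfx : Continuous fun s => f (xf s) := hf.comp_continuous hxcont hxball
  have hint_t : Tendsto (fun k => ∫ s in (0:ℝ)..t, f (u (σ k) (s - δσ k))) atTop
      (𝓝 (∫ s in (0:ℝ)..t, f (xf s))) := by
    rw [Metric.tendsto_atTop]
    intro ε hε
    have hε' : 0 < ε / (T + 1) := by positivity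
    obtain ⟨η, hη, hmod⟩ := Metric.uniformContinuousOn_iff.mp
      ((isCompact_closedBall x₀ r).uniformContinuousOn_of_continuous hf) (ε / (T+1)) hε'
    have hb : Tendsto (fun k => C * δσ k + εd k) atTop (𝓝 0) := by
      have := (hδσ0.const_mul C).add hεd0
      simpa using this
    have hev : ∀ᶠ k in atTop, C * δσ k + εd k < η := hb.eventually (gt_mem_nhds hη)
    obtain ⟨K, hK⟩ := hev.exists_forall_of_atTop
    refine ⟨K, fun k hk => ?_⟩
    have hdistb : ∀ s ∈ Set.uIoc (0:ℝ) t, dist (u (σ k) (s - δσ k)) (xf s) < η := by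
      intro s hs
      rw [Set.uIoc_of_le ht.1] at hs
      have hsIcc : s ∈ Icc (0:ℝ) T := ⟨hs.1.le, hs.2.trans ht.2⟩
      have h1 : dist (u (σ k) (s - δσ k)) (u (σ k) s) ≤ C * δσ k := by
        have := hulip (σ k) (s - δσ k) s
        have h2 : dist (s - δσ k) s = δσ k := by
          rw [Real.dist_eq]
          rw [abs_of_nonpos (by linarith [hδσpos k])]
          ring
        rw [h2] at this
        exact this
      have h3 : dist (u (σ k) s) (xf s) ≤ εd k := by
        rw [hxf_icc s hsIcc]
        have := BoundedContinuousFunction.dist_coe_le_dist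
          (f := gseq (σ k)) (g := glim) (⟨s, hsIcc⟩ : Icc (0:ℝ) T)
        exact this
      calc dist (u (σ k) (s - δσ k)) (xf s)
          ≤ dist (u (σ k) (s - δσ k)) (u (σ k) s) + dist (u (σ k) s) (xf s) :=
            dist_triangle _ _ _
        _ ≤ C * δσ k + εd k := add_le_add h1 h3
        _ < η := hK k hk
    rw [dist_eq_norm, ← intervalIntegral.integral_sub ((hfu k).intervalIntegrable _ _)
      (hfx.intervalIntegrable _ _)]
    have hnorm : ∀ s ∈ Set.uIoc (0:ℝ) t,
        ‖f (u (σ k) (s - δσ k)) - f (xf s)‖ ≤ ε / (T+1) := by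
      intro s hs
      rw [← dist_eq_norm]
      exact (hmod _ (huball _ _) _ (hxball s) (hdistb s hs)).le
    calc ‖∫ s in (0:ℝ)..t, (f (u (σ k) (s - δσ k)) - f (xf s))‖
        ≤ ε / (T+1) * |t - 0| := intervalIntegral.norm_integral_le_of_norm_le_const hnorm
      _ ≤ ε / (T+1) * T := by
          apply mul_le_mul_of_nonneg_left _ hε'.le
          rw [sub_zero, abs_of_nonneg ht.1]
          exact ht.2
      _ < ε := by
          rw [div_mul_eq_mul_div, div_lt_iff₀ (by linarith)]
          nlinarith
  have h1 : Tendsto (fun k => u (σ k) t) atTop (𝓝 (xf t)) := by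
    rw [hxf_icc t ht]
    exact hpt ⟨t, ht⟩
  have h2 : Tendsto (fun k => u (σ k) t) atTop (𝓝 (x₀ + ∫ s in (0:ℝ)..t, f (xf s))) := by
    have h3 : Tendsto (fun k : ℕ => x₀ + ∫ s in (0:ℝ)..t, f (u (σ k) (s - δσ k))) atTop
        (𝓝 (x₀ + ∫ s in (0:ℝ)..t, f (xf s))) := tendsto_const_nhds.add hint_t
    refine h3.congr fun k => ?_
    exact (hueq (σ k) t ht).symm
  exact tendsto_nhds_unique h1 h2


set_option maxHeartbeats 1000000 in
/-- Construction of a local solution on the manifold from the tangency condition. -/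
theorem exists_local_solution {G H : Type*} [NormedAddCommGroup G] [NormedSpace ℝ G]
    [NormedAddCommGroup H] [NormedSpace ℝ H] [CompleteSpace H]
    (j : G →L[ℝ] H) (hj : Function.Injective j) {K : G → H} (hK : Continuous K)
    {m : ℕ} {M : Set H}
    (hMG : M ⊆ Set.range j) (htopo : ContinuousOn (Function.invFun j) M)
    (htang : ∀ y ∈ M, ∀ g : G, j g = y → K g ∈ TangentAt 1 m M y)
    {V : Set (EuclideanSpace ℝ (Fin m))} {U : Set H} {φ : EuclideanSpace ℝ (Fin m) → H}
    (hφ : IsLocalParam 1 M V U φ)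
    {x₀ : EuclideanSpace ℝ (Fin m)} (hx₀ : x₀ ∈ V) :
    ∃ T > (0:ℝ), ∃ Y : ℝ → G,
      j (Y 0) = φ x₀ ∧ (∀ t ∈ Set.Icc 0 T, j (Y t) ∈ M) ∧
      ContinuousOn (fun t => j (Y t)) (Set.Icc 0 T) ∧
      ContinuousOn Y (Set.Icc 0 T) ∧
      IntegrableOn (fun s => K (Y s)) (Set.Icc 0 T) ∧
      ∀ t ∈ Set.Icc 0 T, j (Y t) = φ x₀ + ∫ s in (0:ℝ)..t, K (Y s) := by
  classical
  have hVo := hφ.isOpen_source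
  have hφc : ContinuousOn φ V := hφ.contDiffOn.continuousOn
  have hφM : ∀ x ∈ V, φ x ∈ M := by
    intro x hx
    have : φ x ∈ φ '' V := mem_image_of_mem φ hx
    rw [hφ.image_eq] at this
    exact this.2
  -- the derivative of the chart, continuous on V
  set A : EuclideanSpace ℝ (Fin m) → (EuclideanSpace ℝ (Fin m) →L[ℝ] H) :=
    fun x => fderivWithin ℝ φ V x with hAdef
  have hAcont : ContinuousOn A V :=
    hφ.contDiffOn.continuousOn_fderivWithin hVo.uniqueDiffOn le_rfl
  -- a left inverse of A x₀
  obtain ⟨P, hP⟩ := exists_left_inverse_clm (A x₀) (hφ.immersion x₀ hx₀)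
  set PA : EuclideanSpace ℝ (Fin m) → (EuclideanSpace ℝ (Fin m) →L[ℝ] EuclideanSpace ℝ (Fin m)) :=
    fun x => P.comp (A x) with hPAdef
  have hPAcont : ContinuousOn PA V := by
    have h1 : Continuous fun B : EuclideanSpace ℝ (Fin m) →L[ℝ] H =>
        (ContinuousLinearMap.compL ℝ (EuclideanSpace ℝ (Fin m)) H (EuclideanSpace ℝ (Fin m)) P) B :=
      (ContinuousLinearMap.compL ℝ (EuclideanSpace ℝ (Fin m)) H (EuclideanSpace ℝ (Fin m)) P).continuous
    exact h1.comp_continuousOn hAcont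
  have hPAx₀ : PA x₀ = 1 := by
    refine ContinuousLinearMap.ext fun v => ?_
    simp only [ContinuousLinearMap.one_apply, hPAdef, ContinuousLinearMap.comp_apply]
    exact hP v
  -- an open set where PA is invertible
  set W : Set (EuclideanSpace ℝ (Fin m)) := V ∩ PA ⁻¹' {B | IsUnit B} with hWdef
  have hWo : IsOpen W := hPAcont.isOpen_inter_preimage hVo Units.isOpen
  have hx₀W : x₀ ∈ W := ⟨hx₀, by simp only [Set.mem_preimage, Set.mem_setOf_eq, hPAx₀]; exact isUnit_one⟩
  obtain ⟨ε, hε, hball⟩ := Metric.isOpen_iff.mp hWo x₀ hx₀W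
  set r : ℝ := ε / 2 with hrdef
  have hr : 0 < r := by positivity
  have hballW : Metric.closedBall x₀ r ⊆ W := by
    refine subset_trans ?_ hball
    intro z hz
    have := Metric.mem_closedBall.mp hz
    rw [Metric.mem_ball]
    calc dist z x₀ ≤ r := this
      _ < ε := by rw [hrdef]; linarith
  have hballV : Metric.closedBall x₀ r ⊆ V := fun z hz => (hballW hz).1
  -- the function g : chart point ↦ its G-preimage
  set gf : EuclideanSpace ℝ (Fin m) → G := fun z => Function.invFun j (φ z) with hgf
  have hjg : ∀ z ∈ V, j (gf z) = φ z := by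
    intro z hz
    exact Function.invFun_eq (hMG (hφM z hz))
  have hgcont : ContinuousOn gf V := htopo.comp hφc hφM
  -- the ODE vector field in the chart
  set fODE : EuclideanSpace ℝ (Fin m) → EuclideanSpace ℝ (Fin m) :=
    fun z => Ring.inverse (PA z) (P (K (gf z))) with hfODE
  have hfcont : ContinuousOn fODE (Metric.closedBall x₀ r) := by
    have h1 : ContinuousOn (fun z => Ring.inverse (PA z)) (Metric.closedBall x₀ r) := by
      intro z hz
      obtain ⟨uu, huu⟩ := (hballW hz).2
      have hcA : ContinuousAt Ring.inverse (PA z) := by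
        rw [← huu]; exact NormedRing.inverse_continuousAt uu
      have hcw : ContinuousWithinAt PA (Metric.closedBall x₀ r) z :=
        (hPAcont z (hballV hz)).mono hballV
      have h := hcA.comp_continuousWithinAt hcw
      exact h
    have h2 : ContinuousOn (fun z => P (K (gf z))) (Metric.closedBall x₀ r) :=
      (P.continuous.comp hK).comp_continuousOn (hgcont.mono hballV)
    exact h1.clm_apply h2
  -- tangency gives that fODE is the chart representation of K
  have hfield : ∀ z ∈ Metric.closedBall x₀ r, A z (fODE z) = K (gf z) := by
    intro z hz
    have hzV : z ∈ V := hballV hz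
    have hyM : φ z ∈ M := hφM z hzV
    have htz : K (gf z) ∈ TangentAt 1 m M (φ z) := htang (φ z) hyM (gf z) (hjg z hzV)
    obtain ⟨v, hv⟩ := tangentAt_subset_range hφ hzV htz
    obtain ⟨uu, huu⟩ := (hballW hz).2
    have h1 : PA z v = P (K (gf z)) := by
      show P ((A z) v) = P (K (gf z))
      rw [show (A z) v = K (gf z) from hv]
    have h2 : fODE z = v := by
      show Ring.inverse (PA z) (P (K (gf z))) = v
      rw [← h1, ← huu, Ring.inverse_unit]
      rw [← ContinuousLinearMap.mul_apply, Units.inv_mul, ContinuousLinearMap.one_apply]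
    rw [h2]
    exact hv
  -- solve the ODE in the chart
  obtain ⟨T, hT, x, hx0, hxcont, hxball, hxeq⟩ := peano_exists fODE x₀ r hr hfcont
  set Y : ℝ → G := fun t => gf (x t) with hYdef
  have hxV : ∀ t, x t ∈ V := fun t => hballV (hxball t)
  have hjY : ∀ t, j (Y t) = φ (x t) := fun t => hjg (x t) (hxV t)
  have hY0 : j (Y 0) = φ x₀ := by rw [hjY 0, hx0]
  have hYM : ∀ t ∈ Set.Icc (0:ℝ) T, j (Y t) ∈ M := fun t _ =>
    (hjY t) ▸ hφM (x t) (hxV t)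
  have hφxcont : Continuous fun t => φ (x t) := hφc.comp_continuous hxcont hxV
  have hjYcont : Continuous fun t => j (Y t) := hφxcont.congr fun t => (hjY t).symm
  have hYcont : Continuous Y := hgcont.comp_continuous hxcont hxV
  have hKY : Continuous fun s => K (Y s) := hK.comp hYcont
  refine ⟨T, hT, Y, hY0, hYM, hjYcont.continuousOn, hYcont.continuousOn,
    hKY.integrableOn_Icc, ?_⟩
  intro t ht
  have hq : Continuous fun s => fODE (x s) := hfcont.comp_continuous hxcont hxball
  have hderiv : ∀ s ∈ Set.Ioo (0:ℝ) t, HasDerivWithinAt (fun u => φ (x u)) (K (Y s)) (Set.Ioi s) s := by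
    intro s hs
    have hsmem : Set.Icc (0:ℝ) T ∈ 𝓝 s :=
      Icc_mem_nhds hs.1 (lt_of_lt_of_le hs.2 ht.2)
    have hprim : HasDerivAt (fun u => x₀ + ∫ σ in (0:ℝ)..u, fODE (x σ)) (fODE (x s)) s := by
      have h := intervalIntegral.integral_hasDerivAt_right (hq.intervalIntegrable 0 s)
        (hq.stronglyMeasurableAtFilter volume (𝓝 s)) hq.continuousAt
      exact h.const_add x₀
    have hxs : HasDerivAt x (fODE (x s)) s := by
      refine hprim.congr_of_eventuallyEq ?_
      filter_upwards [hsmem] with u hu using hxeq u hu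
    have hφd : HasFDerivWithinAt φ (A (x s)) V (x s) :=
      ((hφ.contDiffOn.differentiableOn one_ne_zero) (x s) (hxV s)).hasFDerivWithinAt
    have hcomp : HasDerivWithinAt (fun u => φ (x u)) ((A (x s)) (fODE (x s))) (Set.Ioi s) s :=
      hφd.comp_hasDerivWithinAt s (hxs.hasDerivWithinAt) (fun u _ => hxV u)
    have hval : (A (x s)) (fODE (x s)) = K (Y s) := hfield (x s) (hxball s)
    rwa [hval] at hcomp
  have hFTC := intervalIntegral.integral_eq_sub_of_hasDeriv_right_of_le ht.1
    hφxcont.continuousOn hderiv ((hK.comp hYcont).intervalIntegrable 0 t)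
  rw [hjY t]
  rw [hFTC, hx0]
  abel


open MeasureTheory in
/-- Let `(G, H)` be continuously embedded real Banach spaces (embedding
`j : G → H`, injective and continuous linear), `K : G → H` continuous, and `M` an
`m`-dimensional `(G,H)`-submanifold of class `C¹` (i.e. `M ⊆ G` and the two induced
topologies on `M` coincide). The following are equivalent:
(i) local invariance of `M` for the PDE `dY = K(Y) dt`: every `y₀ ∈ M` admits a local
    `M`-valued solution, continuous in `H`;
(ii) `K(y) ∈ T_y M` for each `y ∈ M`;
(iii) `K|_M` is `‖·‖_H`-continuous and every `y₀ ∈ M` admits a local `M`-valued solution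
    which is moreover continuous as a map into `G`. -/
theorem PDE_invariance_characterization
    {G H : Type*} [NormedAddCommGroup G] [NormedSpace ℝ G] [CompleteSpace G]
    [NormedAddCommGroup H] [NormedSpace ℝ H] [CompleteSpace H]
    (j : G →L[ℝ] H) (hj : Function.Injective j)
    {K : G → H} (hK : Continuous K)
    {m : ℕ} {M : Set H} (hM : IsSubmanifold 1 m M)
    (hMG : M ⊆ Set.range j)
    (htopo : ContinuousOn (Function.invFun j) M) :
    ((∀ y₀ ∈ M, ∃ T > (0 : ℝ), ∃ Y : ℝ → G,
        j (Y 0) = y₀ ∧ (∀ t ∈ Set.Icc 0 T, j (Y t) ∈ M) ∧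
        ContinuousOn (fun t => j (Y t)) (Set.Icc 0 T) ∧
        IntegrableOn (fun s => K (Y s)) (Set.Icc 0 T) ∧
        ∀ t ∈ Set.Icc 0 T, j (Y t) = y₀ + ∫ s in (0:ℝ)..t, K (Y s)) ↔
      (∀ y ∈ M, ∀ g : G, j g = y → K g ∈ TangentAt 1 m M y)) ∧
    ((∀ y ∈ M, ∀ g : G, j g = y → K g ∈ TangentAt 1 m M y) ↔
      (ContinuousOn (fun y => K (Function.invFun j y)) M ∧
        ∀ y₀ ∈ M, ∃ T > (0 : ℝ), ∃ Y : ℝ → G,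
          j (Y 0) = y₀ ∧ (∀ t ∈ Set.Icc 0 T, j (Y t) ∈ M) ∧
          ContinuousOn (fun t => j (Y t)) (Set.Icc 0 T) ∧
          ContinuousOn Y (Set.Icc 0 T) ∧
          IntegrableOn (fun s => K (Y s)) (Set.Icc 0 T) ∧
          ∀ t ∈ Set.Icc 0 T, j (Y t) = y₀ + ∫ s in (0:ℝ)..t, K (Y s))) := by
  have easycont : ContinuousOn (fun y => K (Function.invFun j y)) M :=
    hK.comp_continuousOn htopo
  have construct : (∀ y ∈ M, ∀ g : G, j g = y → K g ∈ TangentAt 1 m M y) →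
      ∀ y₀ ∈ M, ∃ T > (0:ℝ), ∃ Y : ℝ → G,
        j (Y 0) = y₀ ∧ (∀ t ∈ Set.Icc 0 T, j (Y t) ∈ M) ∧
        ContinuousOn (fun t => j (Y t)) (Set.Icc 0 T) ∧
        ContinuousOn Y (Set.Icc 0 T) ∧
        IntegrableOn (fun s => K (Y s)) (Set.Icc 0 T) ∧
        ∀ t ∈ Set.Icc 0 T, j (Y t) = y₀ + ∫ s in (0:ℝ)..t, K (Y s) := by
    intro htang y₀ hy₀
    obtain ⟨V, U, φ, hφ, hyU⟩ := hM y₀ hy₀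
    obtain ⟨x₀, hx₀, hφx₀⟩ : ∃ x₀ ∈ V, φ x₀ = y₀ := by
      have h : y₀ ∈ φ '' V := by rw [hφ.image_eq]; exact ⟨hyU, hy₀⟩
      obtain ⟨x₀, h1, h2⟩ := h
      exact ⟨x₀, h1, h2⟩
    obtain ⟨T, hT, Y, h1, h2, h3, h4, h5, h6⟩ :=
      exists_local_solution j hj hK hMG htopo htang hφ hx₀
    rw [hφx₀] at h1 h6
    exact ⟨T, hT, Y, h1, h2, h3, h4, h5, h6⟩
  constructor
  · constructor
    · intro hsol
      exact tangency_of_solutions j hj hK hM htopo hsol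
    · intro htang y₀ hy₀
      obtain ⟨T, hT, Y, h1, h2, h3, h4, h5, h6⟩ := construct htang y₀ hy₀
      exact ⟨T, hT, Y, h1, h2, h3, h5, h6⟩
  · constructor
    · intro htang
      exact ⟨easycont, construct htang⟩
    · rintro ⟨-, hsol⟩
      apply tangency_of_solutions j hj hK hM htopo
      intro y₀ hy₀
      obtain ⟨T, hT, Y, h1, h2, h3, h4, h5, h6⟩ := hsol y₀ hy₀
      exact ⟨T, hT, Y, h1, h2, h3, h5, h6⟩
end
end
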